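/- arXiv:2505.14586 — 5 statements merged into one kernel-verified Lean document; each statement's English description precedes it below -/
import Mathlib

section
/- Let n ≥ 3 and let M be an n×n real symmetric matrix with tr M > 0 and σ₂(M) = 1, and set DF := (tr M)·I − M. There exists a constant C(n) > 0, depending only on n, such that for every n×n real symmetric matrix N with I + N positive semidefinite and tr(DF·N) ≤ 0, one has det(I + N) ≤ C(n)·(tr M)². -/
open Metric MeasureTheory

/-- The second elementary symmetric function of the eigenvalues of a symmetric
matrix, `σ₂(M) = ((tr M)² − ‖M‖_F²)/2`. -/
noncomputable def sigma2 {ι : Type*} [Fintype ι] (M : Matrix ι ι ℝ) : ℝ :=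
  (M.trace ^ 2 - ∑ i, ∑ j, M i j ^ 2) / 2

/-- The Frobenius norm of a matrix. -/
noncomputable def frobNorm {ι : Type*} [Fintype ι] (M : Matrix ι ι ℝ) : ℝ :=
  Real.sqrt (∑ i, ∑ j, M i j ^ 2)

/-- The Hessian matrix `D²u(x)` of a function on Euclidean space. -/
noncomputable def hess {ι : Type*} [Fintype ι] [DecidableEq ι]
    (u : EuclideanSpace ℝ ι → ℝ) (x : EuclideanSpace ℝ ι) : Matrix ι ι ℝ :=
  fun i j =>
    fderiv ℝ (fun y => fderiv ℝ u y (EuclideanSpace.single j (1 : ℝ))) x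
      (EuclideanSpace.single i (1 : ℝ))

/-- The Laplacian `Δu(x)`, the trace of the Hessian. -/
noncomputable def lap {ι : Type*} [Fintype ι] [DecidableEq ι]
    (u : EuclideanSpace ℝ ι → ℝ) (x : EuclideanSpace ℝ ι) : ℝ :=
  (hess u x).trace

section Helpers

open Matrix Finset

variable {n : ℕ}

private lemma amgm (hn : n ≠ 0) (f : Fin n → ℝ) (hf : ∀ i, 0 ≤ f i) :
    ∏ i, f i ≤ ((∑ i, f i) / n) ^ n := by
  have h := Real.geom_mean_le_arith_mean_weighted Finset.univ (fun _ => (n:ℝ)⁻¹) f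
    (fun i _ => by positivity) (by simp [Finset.card_univ]; field_simp) (fun i _ => hf i)
  have hL : ∏ i, f i ^ ((n:ℝ)⁻¹) = (∏ i, f i) ^ ((n:ℝ)⁻¹) := by
    rw [← Real.finset_prod_rpow _ _ (fun i _ => hf i)]
  have hR : ∑ i, (n:ℝ)⁻¹ * f i = (∑ i, f i) / n := by
    rw [← Finset.mul_sum]; ring
  rw [hL, hR] at h
  have h2 := pow_le_pow_left₀ (Real.rpow_nonneg (Finset.prod_nonneg fun i _ => hf i) _) h n
  rwa [Real.rpow_inv_natCast_pow (Finset.prod_nonneg fun i _ => hf i) hn] at h2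

private lemma trace_eq_sum_eigen (A : Matrix (Fin n) (Fin n) ℝ) (hA : A.IsHermitian) :
    A.trace = ∑ i, hA.eigenvalues i := by
  conv_lhs => rw [hA.spectral_theorem]
  rw [Unitary.conjStarAlgAut_apply, Matrix.trace_mul_cycle, Matrix.UnitaryGroup.star_mul_self]
  simp [Matrix.trace_diagonal]

/-- det of psd matrix is at most (trace/n)^n -/
private lemma det_le_trace_div_pow (hn : n ≠ 0) (Q : Matrix (Fin n) (Fin n) ℝ)
    (hQ : Q.PosSemidef) : Q.det ≤ (Q.trace / n) ^ n := by
  have hH := hQ.isHermitian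
  have hdet : Q.det = ∏ i, hH.eigenvalues i := by
    have := hH.det_eq_prod_eigenvalues
    simpa using this
  rw [hdet, trace_eq_sum_eigen Q hH]
  exact amgm hn _ (fun i => hQ.eigenvalues_nonneg i)

end Helpers

/-- **Jacobian bound in the measure estimate.**  For every `n ≥ 3` there is `C(n) > 0`
such that: if `M` is an `n×n` real symmetric matrix with `tr M > 0` and `σ₂(M) = 1`,
`DF := (tr M)·I − M`, and `N` is symmetric with `I + N` positive semidefinite and
`tr(DF·N) ≤ 0`, then `det(I + N) ≤ C(n)·(tr M)²`. -/
theorem jacobian_bound (n : ℕ) (hn : 3 ≤ n) :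
    ∃ C : ℝ, 0 < C ∧
      ∀ M : Matrix (Fin n) (Fin n) ℝ, M.IsSymm → 0 < M.trace → sigma2 M = 1 →
        ∀ N : Matrix (Fin n) (Fin n) ℝ, N.IsSymm →
          (1 + N).PosSemidef →
          ((M.trace • (1 : Matrix (Fin n) (Fin n) ℝ) - M) * N).trace ≤ 0 →
          (1 + N).det ≤ C * M.trace ^ 2 := by
  classical
  have hn0 : n ≠ 0 := by omega
  have hn0' : (0:ℝ) < n := by positivity
  refine ⟨4 ^ (n - 1), by positivity, ?_⟩
  intro M hMsymm ht hσ N _hNsymm hP htr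
  set t : ℝ := M.trace with htdef
  have hM : M.IsHermitian := by
    rwa [Matrix.IsHermitian, Matrix.conjTranspose_eq_transpose_of_trivial]
  set lam : Fin n → ℝ := hM.eigenvalues with hlam
  set U : Matrix (Fin n) (Fin n) ℝ := (hM.eigenvectorUnitary : Matrix (Fin n) (Fin n) ℝ)
    with hUdef
  have hUU : star U * U = 1 := Matrix.UnitaryGroup.star_mul_self _
  have hUU' : U * star U = 1 := Matrix.mem_unitaryGroup_iff.mp hM.eigenvectorUnitary.2
  have hspec : M = U * Matrix.diagonal lam * star U := by
    simpa using hM.spectral_theorem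
  -- sum of eigenvalues
  have hsum : ∑ i, lam i = t := (trace_eq_sum_eigen M hM).symm
  -- sum of squares of eigenvalues
  have hsumsq : ∑ i, (lam i) ^ 2 = t ^ 2 - 2 := by
    have h1 : (M * M).trace = ∑ i, (lam i) ^ 2 := by
      conv_lhs => rw [hspec]
      rw [show U * Matrix.diagonal lam * star U * (U * Matrix.diagonal lam * star U)
          = U * (Matrix.diagonal lam * (star U * U) * Matrix.diagonal lam) * star U by
        noncomm_ring]
      rw [hUU, Matrix.mul_one, Matrix.diagonal_mul_diagonal, Matrix.trace_mul_cycle, hUU]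
      rw [Matrix.one_mul, Matrix.trace_diagonal]
      simp [pow_two]
    have h2 : (M * M).trace = ∑ i, ∑ j, M i j ^ 2 := by
      have hs : ∀ i j, M j i = M i j := fun i j => by
        conv_lhs => rw [← hMsymm]
        rfl
      simp only [Matrix.trace, Matrix.diag, Matrix.mul_apply]
      rw [Finset.sum_comm]
      exact Finset.sum_congr rfl fun i _ => Finset.sum_congr rfl fun j _ => by
        rw [hs i j, pow_two]
    have hσ' : (t ^ 2 - ∑ i, ∑ j, M i j ^ 2) / 2 = 1 := hσ
    rw [← h1, h2]
    linarith
  -- each eigenvalue squared bounded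
  have hsq_le : ∀ i, (lam i) ^ 2 ≤ t ^ 2 - 2 := fun i => by
    rw [← hsumsq]
    exact Finset.single_le_sum (fun j _ => sq_nonneg (lam j)) (Finset.mem_univ i)
  have ht2 : 2 < t ^ 2 := by
    have hcs : (∑ i, lam i) ^ 2 ≤ (n : ℝ) * ∑ i, (lam i) ^ 2 := by
      have h := sq_sum_le_card_mul_sum_sq (s := (Finset.univ : Finset (Fin n))) (f := lam)
      simpa [Finset.card_univ] using h
    rw [hsum, hsumsq] at hcs
    have hn3 : (3:ℝ) ≤ n := by exact_mod_cast hn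
    nlinarith [sq_nonneg t, ht]
  have ht1 : 1 ≤ t := by nlinarith [ht]
  -- eigenvalues of DF
  set mu : Fin n → ℝ := fun i => t - lam i with hmu
  have hmu_lb : ∀ i, 1 / t ≤ mu i := by
    intro i
    rw [div_le_iff₀ (by linarith : (0:ℝ) < t)]
    have h := hsq_le i
    show (1:ℝ) ≤ (t - lam i) * t
    nlinarith [sq_nonneg (t * lam i - (t^2 - 1)), h, ht, ht2, sq_nonneg t]
  have hmu_pos : ∀ i, 0 < mu i := fun i =>
    lt_of_lt_of_le (by positivity) (hmu_lb i)
  -- at most one small eigenvalue: two indices can't both have mu < t/4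
  have htwo : ∀ i j, i ≠ j → mu i < t / 4 → mu j < t / 4 → False := by
    intro i j hij hi hj
    have hsum2 : (lam i) ^ 2 + (lam j) ^ 2 ≤ t ^ 2 - 2 := by
      rw [← hsumsq]
      have : ({i, j} : Finset (Fin n)) ⊆ Finset.univ := Finset.subset_univ _
      calc (lam i) ^ 2 + (lam j) ^ 2 = ∑ k ∈ ({i, j} : Finset (Fin n)), (lam k) ^ 2 := by
            rw [Finset.sum_pair hij]
        _ ≤ ∑ k, (lam k) ^ 2 :=
            Finset.sum_le_sum_of_subset_of_nonneg this (fun k _ _ => sq_nonneg _)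
    have hli : 3 * t / 4 < lam i := by simp only [hmu] at hi; linarith
    have hlj : 3 * t / 4 < lam j := by simp only [hmu] at hj; linarith
    nlinarith
  -- DF
  set DF : Matrix (Fin n) (Fin n) ℝ := t • (1 : Matrix (Fin n) (Fin n) ℝ) - M with hDF
  have hDFspec : DF = U * Matrix.diagonal mu * star U := by
    have h1 : t • (1 : Matrix (Fin n) (Fin n) ℝ) = U * (t • (1 : Matrix (Fin n) (Fin n) ℝ)) * star U := by
      rw [Matrix.mul_smul, Matrix.mul_one, Matrix.smul_mul, hUU']
    rw [hDF]
    conv_lhs => rw [h1, hspec]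
    rw [← Matrix.sub_mul, ← Matrix.mul_sub]
    congr 1
    congr 1
    rw [← Matrix.diagonal_one, ← Matrix.diagonal_smul, Matrix.diagonal_sub]
    congr 1
    funext i
    simp [hmu]
  have hdetDF : DF.det = ∏ i, mu i := by
    rw [hDFspec, Matrix.det_mul, Matrix.det_mul, mul_comm, ← mul_assoc, ← Matrix.det_mul, hUU]
    simp
  -- lower bound on det DF
  have hdetDF_lb : t ^ (n - 2) / 4 ^ (n - 1) ≤ DF.det := by
    obtain ⟨i₀, -, hi₀⟩ := Finset.exists_min_image Finset.univ mu ⟨⟨0, by omega⟩, Finset.mem_univ _⟩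
    have hbig : ∀ j ∈ Finset.univ.erase i₀, t / 4 ≤ mu j := by
      intro j hj
      by_contra hlt
      push_neg at hlt
      exact htwo i₀ j (Finset.ne_of_mem_erase hj).symm
        (lt_of_le_of_lt (hi₀ j (Finset.mem_univ j)) hlt) hlt
    have hprod : (t / 4) ^ (n - 1) ≤ ∏ j ∈ Finset.univ.erase i₀, mu j := by
      have := Finset.prod_le_prod (s := Finset.univ.erase i₀)
        (f := fun _ => t / 4) (g := mu) (fun j _ => by positivity) hbig
      simpa [Finset.card_erase_of_mem (Finset.mem_univ i₀), Finset.card_univ, div_pow] using this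
    rw [hdetDF, ← Finset.mul_prod_erase Finset.univ mu (Finset.mem_univ i₀)]
    have h1t : (0:ℝ) < 1 / t := by positivity
    calc t ^ (n - 2) / 4 ^ (n - 1) = (1 / t) * (t / 4) ^ (n - 1) := by
          have h1 : t * t ^ (n - 2) = t ^ (n - 1) := by
            rw [← pow_succ']; congr 1; omega
          have ht0 : t ≠ 0 := by linarith
          rw [div_pow]
          field_simp
          linear_combination h1
      _ ≤ mu i₀ * ∏ j ∈ Finset.univ.erase i₀, mu j :=
          mul_le_mul (hmu_lb i₀) hprod (by positivity) (le_of_lt (hmu_pos i₀))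
  have hdetDF_pos : 0 < DF.det := by
    rw [hdetDF]; exact Finset.prod_pos fun i _ => hmu_pos i
  -- the conjugated matrix R
  set P : Matrix (Fin n) (Fin n) ℝ := 1 + N with hPdef
  set s : Fin n → ℝ := fun i => Real.sqrt (mu i) with hs
  have hss : ∀ i, s i * s i = mu i := fun i => Real.mul_self_sqrt (le_of_lt (hmu_pos i))
  set Q : Matrix (Fin n) (Fin n) ℝ := star U * P * U with hQdef
  have hQ : Q.PosSemidef := by
    have := hP.conjTranspose_mul_mul_same U
    exact this
  set R : Matrix (Fin n) (Fin n) ℝ := Matrix.diagonal s * Q * Matrix.diagonal s with hRdef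
  have hR : R.PosSemidef := by
    have := hQ.mul_mul_conjTranspose_same (Matrix.diagonal s)
    simpa [Matrix.diagonal_conjTranspose] using this
  -- det R
  have hdetR : R.det = DF.det * P.det := by
    rw [hRdef, Matrix.det_mul, Matrix.det_mul, hQdef, Matrix.det_mul, Matrix.det_mul]
    have hdetU : U.det * (star U).det = 1 := by
      rw [← Matrix.det_mul, hUU']; simp
    have hdiag : (Matrix.diagonal s).det * (Matrix.diagonal s).det = DF.det := by
      rw [Matrix.det_diagonal, hdetDF, ← Finset.prod_mul_distrib]
      exact Finset.prod_congr rfl fun i _ => hss i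
    linear_combination ((star U).det * P.det * U.det) * hdiag + (P.det * DF.det) * hdetU
  -- trace R = trace (DF * P)
  have htrR : R.trace = (DF * P).trace := by
    rw [hRdef, Matrix.trace_mul_cycle, ← Matrix.mul_assoc, Matrix.diagonal_mul_diagonal]
    have hdm : Matrix.diagonal (fun i => s i * s i) = Matrix.diagonal mu := by
      rw [show (fun i => s i * s i) = mu from funext hss]
    rw [hdm, hDFspec, Matrix.trace_mul_cycle]
    exact congrArg Matrix.trace (by rw [← Matrix.mul_assoc])
  -- trace bound
  have htrDFP : (DF * P).trace ≤ (n - 1) * t := by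
    have : DF * P = DF + DF * N := by rw [hPdef, Matrix.mul_add, Matrix.mul_one]
    rw [this, Matrix.trace_add]
    have htrDF : DF.trace = (n - 1) * t := by
      rw [hDF, Matrix.trace_sub, Matrix.trace_smul, Matrix.trace_one]
      simp only [smul_eq_mul, Fintype.card_fin, ← htdef]
      ring
    have : (DF * N).trace ≤ 0 := htr
    linarith
  -- conclude
  have hdetR_le : R.det ≤ t ^ n := by
    have h1 := det_le_trace_div_pow hn0 R hR
    have htrR_nonneg : 0 ≤ R.trace := by
      rw [trace_eq_sum_eigen R hR.isHermitian]
      exact Finset.sum_nonneg fun i _ => hR.eigenvalues_nonneg i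
    have h2 : R.trace / n ≤ t := by
      rw [htrR] at htrR_nonneg ⊢
      rw [div_le_iff₀ hn0']
      have hnt : (n - 1 : ℝ) * t ≤ n * t := by nlinarith
      linarith [htrDFP]
    calc R.det ≤ (R.trace / n) ^ n := h1
      _ ≤ t ^ n := pow_le_pow_left₀ (by positivity) h2 n
  -- final computation
  have hkey : DF.det * P.det ≤ t ^ n := by rw [← hdetR]; exact hdetR_le
  have hPdet_nonneg : 0 ≤ P.det := by
    have h := hP.isHermitian.det_eq_prod_eigenvalues
    have h2 : P.det = ∏ i, hP.isHermitian.eigenvalues i := by simpa using h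
    rw [h2]
    exact Finset.prod_nonneg fun i _ => hP.eigenvalues_nonneg i
  have hstep : (t ^ (n - 2) / 4 ^ (n - 1)) * P.det ≤ t ^ n :=
    le_trans (mul_le_mul_of_nonneg_right hdetDF_lb hPdet_nonneg) hkey
  have htpow : t ^ n = t ^ (n - 2) * t ^ 2 := by
    rw [← pow_add]; congr 1; omega
  have h4pos : (0:ℝ) < 4 ^ (n - 1) := by positivity
  have htn2 : (0:ℝ) < t ^ (n - 2) := by positivity
  have h1 : t ^ (n - 2) / 4 ^ (n - 1) * P.det ≤ t ^ (n - 2) * t ^ 2 := htpow ▸ hstep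
  rw [div_mul_eq_mul_div, div_le_iff₀ h4pos] at h1
  have h2 : t ^ (n - 2) * P.det ≤ t ^ (n - 2) * (4 ^ (n - 1) * t ^ 2) := by
    rw [show t ^ (n-2) * (4 ^ (n-1) * t ^ 2) = t ^ (n-2) * t ^ 2 * 4 ^ (n-1) from by ring]
    exact h1
  exact le_of_mul_le_mul_left h2 htn2
end

section
/- Let n ≥ 2 and define d : ℝⁿ → ℝ by d(x) = |x₁| (the distance to the hyperplane {x₁ = 0}). If φ is a C² function on a neighborhood of a point x₀ ∈ ℝⁿ whose Hessian D²φ(y) is 2-convex at every point y of that neighborhood, and φ touches d from below at x₀ (that is, φ ≤ d near x₀ and φ(x₀) = d(x₀)), then σ₂(D²φ(x₀)) ≤ 0. In particular, d is a viscosity supersolution of σ₂(D²u) = 0 (and hence of σ₂(D²u) = 1) on ℝⁿ. -/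
open Metric MeasureTheory

/-- A symmetric matrix is 2-convex if `tr M ≥ 0` and `σ₂(M) ≥ 0`. -/
def TwoConvex {ι : Type*} [Fintype ι] (M : Matrix ι ι ℝ) : Prop :=
  0 ≤ M.trace ∧ 0 ≤ sigma2 M

/-- Analytic core: if `φ` is `C²` on a ball around `x₀` and `t ↦ φ (x₀ + t • v) - t * c`
has a local max at `0`, then the second directional derivative of `φ` along `v` at `x₀`
is nonpositive. -/
lemma second_dir_deriv_nonpos {E : Type*} [NormedAddCommGroup E] [NormedSpace ℝ E]
    {φ : E → ℝ} {x₀ v : E} {ε c : ℝ} (hε : 0 < ε)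
    (hφ : ContDiffOn ℝ 2 φ (ball x₀ ε))
    (hmax : IsLocalMax (fun t : ℝ => φ (x₀ + t • v) - t * c) 0) :
    fderiv ℝ (fun y => fderiv ℝ φ y v) x₀ v ≤ 0 := by
  by_contra hd
  push_neg at hd
  set F : E → ℝ := fun y => fderiv ℝ φ y v with hFdef
  have hx₀ : x₀ ∈ ball x₀ ε := mem_ball_self hε
  have hFc : ContDiffOn ℝ 1 F (ball x₀ ε) := by
    have h1 : ContDiffOn ℝ 1 (fun y => fderiv ℝ φ y) (ball x₀ ε) :=
      hφ.fderiv_of_isOpen isOpen_ball (by norm_num)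
    exact (ContinuousLinearMap.apply ℝ ℝ v).contDiff.comp_contDiffOn h1
  have hFdiff : ∀ y ∈ ball x₀ ε, DifferentiableAt ℝ F y := fun y hy =>
    ((hFc.differentiableOn one_ne_zero) y hy).differentiableAt (isOpen_ball.mem_nhds hy)
  have hφdiff : ∀ y ∈ ball x₀ ε, DifferentiableAt ℝ φ y := fun y hy =>
    ((hφ.differentiableOn (by norm_num)) y hy).differentiableAt (isOpen_ball.mem_nhds hy)
  have hline : ∀ t : ℝ, HasDerivAt (fun t : ℝ => x₀ + t • v) v t := fun t => by
    simpa using ((hasDerivAt_id t).smul_const v).const_add x₀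
  set δ : ℝ := ε / (‖v‖ + 1) with hδdef
  have hδ : 0 < δ := div_pos hε (by positivity)
  have hεδ : ε = δ * (‖v‖ + 1) := by
    rw [hδdef]; field_simp
  have hmem : ∀ t : ℝ, t ∈ ball (0:ℝ) δ → x₀ + t • v ∈ ball x₀ ε := by
    intro t ht
    rw [mem_ball, Real.dist_eq, sub_zero] at ht
    rw [mem_ball, dist_eq_norm, add_sub_cancel_left, norm_smul, Real.norm_eq_abs]
    nlinarith [abs_nonneg t, norm_nonneg v]
  set G : ℝ → ℝ := fun t => φ (x₀ + t • v) - t * c with hGdef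
  set ψ : ℝ → ℝ := fun t => F (x₀ + t • v) - c with hψdef
  have hG' : ∀ t ∈ ball (0:ℝ) δ, HasDerivAt G (ψ t) t := by
    intro t ht
    have h1 : HasDerivAt (fun t : ℝ => φ (x₀ + t • v)) (F (x₀ + t • v)) t :=
      ((hφdiff _ (hmem t ht)).hasFDerivAt).comp_hasDerivAt t (hline t)
    exact h1.sub (hasDerivAt_mul_const c)
  have hψ0 : ψ 0 = 0 := hmax.hasDerivAt_eq_zero (hG' 0 (mem_ball_self hδ))
  have hψ' : HasDerivAt ψ (fderiv ℝ F x₀ v) 0 := by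
    have hFd1 : HasFDerivAt F (fderiv ℝ F x₀) (x₀ + (0:ℝ) • v) := by
      simpa using (hFdiff x₀ hx₀).hasFDerivAt
    have h1 := hFd1.comp_hasDerivAt 0 (hline 0)
    exact h1.sub_const c
  have hslope : Filter.Tendsto (fun t : ℝ => ψ t / t) (nhdsWithin (0:ℝ) {(0:ℝ)}ᶜ)
      (nhds (fderiv ℝ F x₀ v)) := by
    have h := hasDerivAt_iff_tendsto_slope.mp hψ'
    refine h.congr fun t => ?_
    simp [slope_def_field, hψ0]
  have h1 : ∀ᶠ t in nhdsWithin (0:ℝ) {(0:ℝ)}ᶜ, 0 < ψ t / t :=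
    hslope.eventually (eventually_gt_nhds hd)
  have h1' : ∀ᶠ t in nhds (0:ℝ), t ≠ 0 → 0 < ψ t / t := by
    have := eventually_nhdsWithin_iff.mp h1
    simpa using this
  have h2 : ∀ᶠ t in nhds (0:ℝ), G t ≤ G 0 := hmax
  have h3 : ∀ᶠ t in nhds (0:ℝ), t ∈ ball (0:ℝ) δ :=
    isOpen_ball.eventually_mem (mem_ball_self hδ)
  obtain ⟨r, hr, hP⟩ := Metric.eventually_nhds_iff.mp ((h1'.and h2).and h3)
  set ρ := r / 2 with hρdef
  have hρpos : 0 < ρ := by positivity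
  have hmono : StrictMonoOn G (Set.Icc 0 ρ) := by
    apply strictMonoOn_of_deriv_pos (convex_Icc _ _)
    · intro t ht
      have htd : dist t 0 < r := by
        rw [Real.dist_eq, sub_zero, abs_of_nonneg ht.1]
        have := ht.2; rw [hρdef] at this; linarith
      exact ((hG' t (hP htd).2).continuousAt).continuousWithinAt
    · intro t ht
      rw [interior_Icc] at ht
      have htd : dist t 0 < r := by
        rw [Real.dist_eq, sub_zero, abs_of_pos ht.1]
        have := ht.2; rw [hρdef] at this; linarith
      obtain ⟨⟨hpos, _⟩, hball⟩ := hP htd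
      rw [(hG' t hball).deriv]
      have h4 := mul_pos (hpos (ne_of_gt ht.1)) ht.1
      rwa [div_mul_cancel₀ _ (ne_of_gt ht.1)] at h4
  have hlt : G 0 < G ρ :=
    hmono (Set.left_mem_Icc.mpr hρpos.le) (Set.right_mem_Icc.mpr hρpos.le) hρpos
  have hle : G ρ ≤ G 0 := by
    have : dist ρ 0 < r := by
      rw [Real.dist_eq, sub_zero, abs_of_pos hρpos]; rw [hρdef]; linarith
    exact (hP this).1.2
  linarith

/-- **The distance to a hyperplane is a viscosity supersolution of `σ₂(D²u) = 0`.**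
Let `n ≥ 2` and `d(x) = |x₁|`.  If `φ` is `C²` on a neighborhood of `x₀` with everywhere
2-convex Hessian and `φ` touches `d` from below at `x₀`, then `σ₂(D²φ)(x₀) ≤ 0`. -/
theorem dist_hyperplane_supersolution (n : ℕ) (hn : 2 ≤ n)
    (x₀ : EuclideanSpace ℝ (Fin n)) (φ : EuclideanSpace ℝ (Fin n) → ℝ) (ε : ℝ) (hε : 0 < ε)
    (hφ : ContDiffOn ℝ 2 φ (ball x₀ ε))
    (hconv : ∀ y ∈ ball x₀ ε, TwoConvex (hess φ y))
    (htouch : ∀ y ∈ ball x₀ ε, φ y ≤ |y (⟨0, by omega⟩ : Fin n)|)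
    (heq : φ x₀ = |x₀ (⟨0, by omega⟩ : Fin n)|) :
    sigma2 (hess φ x₀) ≤ 0 := by
  have hn0 : 0 < n := by omega
  set k : Fin n := ⟨0, hn0⟩ with hkdef
  have htouch' : ∀ y ∈ ball x₀ ε, φ y ≤ |y k| := htouch
  have heq' : φ x₀ = |x₀ k| := heq
  have hx₀ : x₀ ∈ ball x₀ ε := mem_ball_self hε
  set M := hess φ x₀ with hM
  have hev : ∀ v : EuclideanSpace ℝ (Fin n),
      ∀ᶠ t in nhds (0:ℝ), x₀ + t • v ∈ ball x₀ ε := by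
    intro v
    have hc : Continuous fun t : ℝ => x₀ + t • v :=
      continuous_const.add (continuous_id.smul continuous_const)
    have hmem0 : x₀ + (0:ℝ) • v ∈ ball x₀ ε := by simpa using hx₀
    have := (hc.continuousAt (x := (0:ℝ))).eventually_mem (isOpen_ball.mem_nhds hmem0)
    simpa using this
  have hdiag : ∀ i : Fin n, i ≠ k → M i i ≤ 0 := by
    intro i hi
    have hmax : IsLocalMax
        (fun t : ℝ => φ (x₀ + t • EuclideanSpace.single i (1:ℝ)) - t * 0) 0 := by
      filter_upwards [hev (EuclideanSpace.single i (1:ℝ))] with t ht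
      have h1 := htouch' _ ht
      have h2 : (x₀ + t • EuclideanSpace.single i (1:ℝ)) k = x₀ k := by
        simp [EuclideanSpace.single_apply, Ne.symm hi]
      simp only [mul_zero, sub_zero, zero_smul, add_zero]
      rw [heq', ← h2]
      exact h1
    exact second_dir_deriv_nonpos hε hφ hmax
  have htr : M.trace = ∑ i, M i i := by
    simp [Matrix.trace, Matrix.diag]
  have htrpos : 0 ≤ M.trace := (hconv x₀ hx₀).1
  by_cases h0 : x₀ k = 0
  · -- x₀ on the hyperplane
    have htrM : M.trace ≤ M k k := by
      rw [htr, ← Finset.add_sum_erase _ _ (Finset.mem_univ k)]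
      have : ∑ i ∈ Finset.univ.erase k, M i i ≤ 0 :=
        Finset.sum_nonpos fun i hi => hdiag i (Finset.ne_of_mem_erase hi)
      linarith
    have hsq : M.trace ^ 2 ≤ M k k ^ 2 := pow_le_pow_left₀ htrpos htrM 2
    have h1 : M k k ^ 2 ≤ ∑ j, M k j ^ 2 :=
      Finset.single_le_sum (f := fun j => M k j ^ 2)
        (fun j _ => sq_nonneg _) (Finset.mem_univ k)
    have h2 : ∑ j, M k j ^ 2 ≤ ∑ i, ∑ j, M i j ^ 2 :=
      Finset.single_le_sum (f := fun i => ∑ j, M i j ^ 2)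
        (fun i _ => Finset.sum_nonneg fun j _ => sq_nonneg _) (Finset.mem_univ k)
    rw [sigma2]
    linarith
  · -- x₀ off the hyperplane: d is linear nearby
    set s : ℝ := if 0 < x₀ k then 1 else -1 with hsdef
    have habs : ∀ t : ℝ, |t| < |x₀ k| → |x₀ k + t| = s * x₀ k + s * t := by
      intro t ht
      rcases lt_or_gt_of_ne h0 with hneg | hpos
      · have hs1 : s = -1 := hsdef.trans (if_neg (by linarith))
        rw [abs_of_neg hneg, abs_lt] at ht
        rw [hs1, abs_of_neg (by linarith : x₀ k + t < 0)]
        ring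
      · have hs1 : s = 1 := hsdef.trans (if_pos hpos)
        rw [abs_of_pos hpos, abs_lt] at ht
        rw [hs1, abs_of_pos (by linarith : 0 < x₀ k + t)]
        ring
    have hseq : |x₀ k| = s * x₀ k := by
      have := habs 0 (by simpa using abs_pos.mpr h0)
      simpa using this
    have hsmall : ∀ᶠ t in nhds (0:ℝ), |t| < |x₀ k| := by
      rw [Metric.eventually_nhds_iff]
      exact ⟨|x₀ k|, abs_pos.mpr h0, fun t ht => by simpa [Real.dist_eq] using ht⟩
    have hmax : IsLocalMax
        (fun t : ℝ => φ (x₀ + t • EuclideanSpace.single k (1:ℝ)) - t * s) 0 := by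
      filter_upwards [hev (EuclideanSpace.single k (1:ℝ)), hsmall] with t ht hts
      have h1 := htouch' _ ht
      have h2 : (x₀ + t • EuclideanSpace.single k (1:ℝ)) k = x₀ k + t := by
        simp [EuclideanSpace.single_apply]
      rw [h2, habs t hts] at h1
      simp only [zero_smul, add_zero, zero_mul, sub_zero]
      rw [heq', hseq]
      linarith [mul_comm t s]
    have hkk : M k k ≤ 0 := second_dir_deriv_nonpos hε hφ hmax
    have htrM : M.trace ≤ 0 := by
      rw [htr]
      refine Finset.sum_nonpos fun i _ => ?_
      by_cases hi : i = k
      · rw [hi]; exact hkk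
      · exact hdiag i hi
    have htr0 : M.trace = 0 := le_antisymm htrM htrpos
    have hsum : 0 ≤ ∑ i, ∑ j, M i j ^ 2 :=
      Finset.sum_nonneg fun i _ => Finset.sum_nonneg fun j _ => sq_nonneg _
    rw [sigma2, htr0]
    linarith
end

section
/- Let n ≥ 2 and write points of ℝⁿ as x = (x₁, x') with x' ∈ ℝ^{n−1}. Let f(s) := s·√(−log s) for s ∈ (0, 1/2). Let h : ℝ^{n−1} → ℝ be a harmonic function, let φ be a smooth compactly supported function on ℝ^{n−1}, let K ∈ ℝ, and fix τ ∈ (0, 1/2). For δ > 0 define ψ_δ(x) := δ·φ(x')·f(x₁) + h(x') + K·x₁ on the slab {0 < x₁ < τ}. Then there exists δ₀ > 0 such that for all 0 < δ < δ₀ one has σ₂(D²ψ_δ)(x) < 1 for every x in {0 < x₁ < τ} ∩ B₂. -/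
open Metric MeasureTheory

/-- The barrier profile `f(s) = s·√(−log s)` (junk values outside `(0,1/2)`). -/
noncomputable def barrierProfile (s : ℝ) : ℝ := s * Real.sqrt (-Real.log s)

/-! ### Auxiliary scalar lemmas -/

noncomputable def B1 (s : ℝ) : ℝ :=
  Real.sqrt (-Real.log s) - (2 * Real.sqrt (-Real.log s))⁻¹

noncomputable def B2 (s : ℝ) : ℝ :=
  -((2 * s * Real.sqrt (-Real.log s))⁻¹)
    - (4 * s * (-Real.log s) * Real.sqrt (-Real.log s))⁻¹

lemma Lpos {s : ℝ} (h1 : 0 < s) (h2 : s < 1) : 0 < -Real.log s := by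
  have := Real.log_neg h1 h2; linarith

lemma hasDerivAt_bp {s : ℝ} (h1 : 0 < s) (h2 : s < 1) :
    HasDerivAt barrierProfile (B1 s) s := by
  have hL := Lpos h1 h2
  have hr : 0 < Real.sqrt (-Real.log s) := Real.sqrt_pos.2 hL
  have hlog : HasDerivAt (fun t : ℝ => -Real.log t) (-s⁻¹) s :=
    (Real.hasDerivAt_log h1.ne').neg
  have hsq : HasDerivAt (fun t : ℝ => Real.sqrt (-Real.log t))
      (-s⁻¹ / (2 * Real.sqrt (-Real.log s))) s := hlog.sqrt hL.ne'
  have := (hasDerivAt_id s).mul hsq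
  refine HasDerivAt.congr_deriv this ?_
  unfold B1
  simp only [id_eq]
  field_simp
  ring

lemma hasDerivAt_B1 {s : ℝ} (h1 : 0 < s) (h2 : s < 1) :
    HasDerivAt B1 (B2 s) s := by
  have hL := Lpos h1 h2
  have hr : 0 < Real.sqrt (-Real.log s) := Real.sqrt_pos.2 hL
  have hr2 : Real.sqrt (-Real.log s) ^ 2 = -Real.log s := Real.sq_sqrt hL.le
  have hlog : HasDerivAt (fun t : ℝ => -Real.log t) (-s⁻¹) s :=
    (Real.hasDerivAt_log h1.ne').neg
  have hsq : HasDerivAt (fun t : ℝ => Real.sqrt (-Real.log t))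
      (-s⁻¹ / (2 * Real.sqrt (-Real.log s))) s := hlog.sqrt hL.ne'
  have h2sq : HasDerivAt (fun t : ℝ => 2 * Real.sqrt (-Real.log t))
      (2 * (-s⁻¹ / (2 * Real.sqrt (-Real.log s)))) s := hsq.const_mul 2
  have hinv := h2sq.inv (by positivity)
  have := hsq.sub hinv
  refine HasDerivAt.congr_deriv this ?_
  unfold B2
  set r := Real.sqrt (-Real.log s) with hrdef
  rw [← hr2]
  field_simp
  ring

lemma bp_nonneg {s : ℝ} (h1 : 0 < s) : 0 ≤ barrierProfile s := by
  unfold barrierProfile; positivity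

lemma bp_le_one {s : ℝ} (h1 : 0 < s) (h2 : s < 1) : barrierProfile s ≤ 1 := by
  have hL := Lpos h1 h2
  have hle : -Real.log s ≤ s⁻¹ := by
    have := Real.log_le_sub_one_of_pos (x := s⁻¹) (by positivity)
    rw [Real.log_inv] at this
    nlinarith [inv_pos.2 h1]
  have h1s : (1:ℝ) ≤ s⁻¹ := (one_le_inv_iff₀).2 ⟨h1, h2.le⟩
  have : Real.sqrt (-Real.log s) ≤ s⁻¹ := by
    calc Real.sqrt (-Real.log s) ≤ Real.sqrt (s⁻¹ * s⁻¹) := by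
          apply Real.sqrt_le_sqrt; nlinarith
      _ = s⁻¹ := by rw [Real.sqrt_mul_self (by positivity)]
  unfold barrierProfile
  calc s * Real.sqrt (-Real.log s) ≤ s * s⁻¹ := by nlinarith
    _ = 1 := by field_simp

lemma B2_mul_bp {s : ℝ} (h1 : 0 < s) (h2 : s < 1/2) :
    |B2 s * barrierProfile s| ≤ 1 := by
  have h2' : s < 1 := by linarith
  have hL := Lpos h1 h2'
  have hr : 0 < Real.sqrt (-Real.log s) := Real.sqrt_pos.2 hL
  have hr2 : Real.sqrt (-Real.log s) ^ 2 = -Real.log s := Real.sq_sqrt hL.le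
  have hLb : Real.log 2 ≤ -Real.log s := by
    have : Real.log s < Real.log (1/2) := Real.log_lt_log h1 h2
    rw [show (1:ℝ)/2 = 2⁻¹ by norm_num, Real.log_inv] at this
    linarith
  have hlog2 : (0.6931471803 : ℝ) < Real.log 2 := Real.log_two_gt_d9
  have key : B2 s * barrierProfile s = -(1/2) - (4 * (-Real.log s))⁻¹ := by
    unfold B2 barrierProfile
    set r := Real.sqrt (-Real.log s) with hrdef
    rw [← hr2]
    field_simp
  rw [key]
  have hpos : 0 < 4 * (-Real.log s) := by linarith
  have : (4 * (-Real.log s))⁻¹ ≤ (4 * Real.log 2)⁻¹ := by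
    apply inv_anti₀ (by nlinarith) (by nlinarith)
  have h4 : (4 * Real.log 2)⁻¹ ≤ 1/2 := by
    rw [inv_le_iff_one_le_mul₀ (by nlinarith)]; nlinarith
  rw [abs_le]
  constructor <;> nlinarith [inv_pos.2 hpos]

/-! ### The projection map -/

noncomputable def Pmap (m : ℕ) :
    EuclideanSpace ℝ (Fin (m+1)) →L[ℝ] EuclideanSpace ℝ (Fin m) :=
  (EuclideanSpace.equiv (Fin m) ℝ).symm.toContinuousLinearMap.comp
    (ContinuousLinearMap.pi fun k : Fin m => EuclideanSpace.proj k.succ)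

@[simp] lemma Pmap_apply (m : ℕ) (y : EuclideanSpace ℝ (Fin (m+1))) (k : Fin m) :
    Pmap m y k = y k.succ := rfl

lemma Pmap_single_zero (m : ℕ) :
    Pmap m (EuclideanSpace.single (0 : Fin (m+1)) (1:ℝ)) = 0 := by
  ext k
  simp [EuclideanSpace.single_apply, Fin.succ_ne_zero]

lemma Pmap_single_succ (m : ℕ) (k : Fin m) :
    Pmap m (EuclideanSpace.single (k.succ : Fin (m+1)) (1:ℝ))
      = EuclideanSpace.single k (1:ℝ) := by
  ext i
  simp [EuclideanSpace.single_apply, Fin.succ_inj]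

/-! ### The Hessian computation -/

lemma main_calc {m : ℕ}
    (h : EuclideanSpace ℝ (Fin m) → ℝ) (hh : ContDiff ℝ 2 h)
    (φ : EuclideanSpace ℝ (Fin m) → ℝ) (hφ : ContDiff ℝ (⊤ : ℕ∞) φ)
    (δ K : ℝ) (x : EuclideanSpace ℝ (Fin (m+1)))
    (hx0 : 0 < x 0) (hx1 : x 0 < 1) :
    hess (fun y => δ * φ (Pmap m y) * barrierProfile (y 0) + h (Pmap m y) + K * y 0) x 0 0
      = δ * (φ (Pmap m x) * B2 (x 0)) ∧
    ∀ k : Fin m,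
      hess (fun y => δ * φ (Pmap m y) * barrierProfile (y 0) + h (Pmap m y) + K * y 0)
          x k.succ k.succ
        = δ * (barrierProfile (x 0) * hess φ (Pmap m x) k k) + hess h (Pmap m x) k k := by
  classical
  set p := Pmap m with hp
  set c : EuclideanSpace ℝ (Fin (m+1)) →L[ℝ] ℝ := EuclideanSpace.proj 0 with hc
  set u : EuclideanSpace ℝ (Fin (m+1)) → ℝ :=
    fun y => δ * φ (p y) * barrierProfile (y 0) + h (p y) + K * y 0 with hu
  set D : EuclideanSpace ℝ (Fin (m+1)) → (EuclideanSpace ℝ (Fin (m+1)) →L[ℝ] ℝ) :=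
    fun y => δ • (φ (p y) • (B1 (y 0) • c)
        + barrierProfile (y 0) • ((fderiv ℝ φ (p y)).comp p))
      + (fderiv ℝ h (p y)).comp p + K • c with hD
  -- the first derivative
  have hDf : ∀ y : EuclideanSpace ℝ (Fin (m+1)), 0 < y 0 → y 0 < 1 →
      HasFDerivAt u (D y) y := by
    intro y hy0 hy1
    have hcd : HasFDerivAt (fun y : EuclideanSpace ℝ (Fin (m+1)) => y 0) c y :=
      c.hasFDerivAt
    have hPd : HasFDerivAt (fun y : EuclideanSpace ℝ (Fin (m+1)) => p y) p y :=
      p.hasFDerivAt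
    have h1 : HasFDerivAt (fun y => φ (p y)) ((fderiv ℝ φ (p y)).comp p) y :=
      ((hφ.differentiable (by simp)) (p y)).hasFDerivAt.comp y hPd
    have hb : HasFDerivAt (fun y : EuclideanSpace ℝ (Fin (m+1)) => barrierProfile (y 0))
        (B1 (y 0) • c) y :=
      HasDerivAt.comp_hasFDerivAt (f := fun y : EuclideanSpace ℝ (Fin (m+1)) => y 0) y (hasDerivAt_bp hy0 hy1) hcd
    have hmul := h1.mul hb
    have hδ := hmul.const_mul δ
    have hhp : HasFDerivAt (fun y => h (p y)) ((fderiv ℝ h (p y)).comp p) y :=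
      ((hh.differentiable (by norm_num)) (p y)).hasFDerivAt.comp y hPd
    have hKp : HasFDerivAt (fun y : EuclideanSpace ℝ (Fin (m+1)) => K * y 0) (K • c) y :=
      hcd.const_mul K
    have hsum := (hδ.add hhp).add hKp
    have hueq : u = fun y => δ * (φ (p y) * barrierProfile (y 0)) + h (p y) + K * y 0 := by
      funext y; rw [hu]; ring
    rw [hueq]
    exact hsum
  have hfd : ∀ y : EuclideanSpace ℝ (Fin (m+1)), 0 < y 0 → y 0 < 1 →
      fderiv ℝ u y = D y := fun y a b => (hDf y a b).fderiv
  have hUopen : IsOpen {y : EuclideanSpace ℝ (Fin (m+1)) | 0 < y 0 ∧ y 0 < 1} := by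
    have : {y : EuclideanSpace ℝ (Fin (m+1)) | 0 < y 0 ∧ y 0 < 1}
        = (fun y : EuclideanSpace ℝ (Fin (m+1)) => y 0) ⁻¹' Set.Ioo 0 1 := rfl
    rw [this]
    exact isOpen_Ioo.preimage c.continuous
  have hxU : x ∈ {y : EuclideanSpace ℝ (Fin (m+1)) | 0 < y 0 ∧ y 0 < 1} := ⟨hx0, hx1⟩
  have hmem := hUopen.mem_nhds hxU
  constructor
  · -- entry (0,0)
    have hev : (fun y => fderiv ℝ u y (EuclideanSpace.single (0 : Fin (m+1)) (1:ℝ)))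
        =ᶠ[nhds x] fun y => δ * (φ (p y) * B1 (y 0)) + K := by
      filter_upwards [hmem] with y hy
      rw [hfd y hy.1 hy.2]
      simp [hD, hp, hc, Pmap_single_zero, EuclideanSpace.single_apply]
    have hG0 : HasFDerivAt (fun y => δ * (φ (p y) * B1 (y 0)) + K)
        (δ • (φ (p x) • (B2 (x 0) • c)
          + B1 (x 0) • ((fderiv ℝ φ (p x)).comp p))) x := by
      have hcd : HasFDerivAt (fun y : EuclideanSpace ℝ (Fin (m+1)) => y 0) c x :=
        c.hasFDerivAt
      have h1 : HasFDerivAt (fun y => φ (p y)) ((fderiv ℝ φ (p x)).comp p) x :=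
        ((hφ.differentiable (by simp)) (p x)).hasFDerivAt.comp x p.hasFDerivAt
      have hb : HasFDerivAt (fun y : EuclideanSpace ℝ (Fin (m+1)) => B1 (y 0))
          (B2 (x 0) • c) x :=
        HasDerivAt.comp_hasFDerivAt (f := fun y : EuclideanSpace ℝ (Fin (m+1)) => y 0) x (hasDerivAt_B1 hx0 hx1) hcd
      exact ((h1.mul hb).const_mul δ).add_const K
    show fderiv ℝ (fun y => fderiv ℝ u y (EuclideanSpace.single (0 : Fin (m+1)) (1:ℝ))) x
        (EuclideanSpace.single (0 : Fin (m+1)) (1:ℝ)) = _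
    rw [hev.fderiv_eq, hG0.fderiv]
    simp [hp, hc, Pmap_single_zero, EuclideanSpace.single_apply]
  · -- entries (k.succ, k.succ)
    intro k
    set v : EuclideanSpace ℝ (Fin m) := EuclideanSpace.single k (1:ℝ) with hv
    set Fφ : EuclideanSpace ℝ (Fin m) → ℝ := fun z => fderiv ℝ φ z v with hFφ
    set Fh : EuclideanSpace ℝ (Fin m) → ℝ := fun z => fderiv ℝ h z v with hFh
    have hev : (fun y => fderiv ℝ u y (EuclideanSpace.single (k.succ : Fin (m+1)) (1:ℝ)))
        =ᶠ[nhds x] fun y => δ * (barrierProfile (y 0) * Fφ (p y)) + Fh (p y) := by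
      filter_upwards [hmem] with y hy
      rw [hfd y hy.1 hy.2]
      simp [hD, hp, hc, hFφ, hFh, hv, Pmap_single_succ, EuclideanSpace.single_apply,
        Ne.symm (Fin.succ_ne_zero k)]
    have hFφc : ContDiff ℝ (⊤ : ℕ∞) Fφ :=
      (hφ.fderiv_right (le_of_eq rfl)).clm_apply contDiff_const
    have hFhc : ContDiff ℝ 1 Fh :=
      (hh.fderiv_right (by norm_num)).clm_apply contDiff_const
    have hG : HasFDerivAt (fun y => δ * (barrierProfile (y 0) * Fφ (p y)) + Fh (p y))
        (δ • (barrierProfile (x 0) • ((fderiv ℝ Fφ (p x)).comp p)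
            + Fφ (p x) • (B1 (x 0) • c))
          + (fderiv ℝ Fh (p x)).comp p) x := by
      have hcd : HasFDerivAt (fun y : EuclideanSpace ℝ (Fin (m+1)) => y 0) c x :=
        c.hasFDerivAt
      have hb : HasFDerivAt (fun y : EuclideanSpace ℝ (Fin (m+1)) => barrierProfile (y 0))
          (B1 (x 0) • c) x :=
        HasDerivAt.comp_hasFDerivAt (f := fun y : EuclideanSpace ℝ (Fin (m+1)) => y 0) x (hasDerivAt_bp hx0 hx1) hcd
      have h1 : HasFDerivAt (fun y => Fφ (p y)) ((fderiv ℝ Fφ (p x)).comp p) x :=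
        ((hFφc.differentiable (by simp)) (p x)).hasFDerivAt.comp x p.hasFDerivAt
      have h2 : HasFDerivAt (fun y => Fh (p y)) ((fderiv ℝ Fh (p x)).comp p) x :=
        ((hFhc.differentiable (by norm_num)) (p x)).hasFDerivAt.comp x p.hasFDerivAt
      exact ((hb.mul h1).const_mul δ).add h2
    show fderiv ℝ (fun y => fderiv ℝ u y (EuclideanSpace.single (k.succ : Fin (m+1)) (1:ℝ))) x
        (EuclideanSpace.single (k.succ : Fin (m+1)) (1:ℝ)) = _
    rw [hev.fderiv_eq, hG.fderiv]
    have e1 : hess φ (p x) k k = fderiv ℝ Fφ (p x) v := rfl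
    have e2 : hess h (p x) k k = fderiv ℝ Fh (p x) v := rfl
    rw [e1, e2]
    simp [hp, hc, hv, Pmap_single_succ, EuclideanSpace.single_apply,
      Ne.symm (Fin.succ_ne_zero k)]


set_option maxHeartbeats 2000000 in
/-- **The barrier estimate.**  Write points of `ℝⁿ = ℝ^{m+1}` as `x = (x₁, x')`.  Let `h` be
harmonic on `ℝ^m`, `φ` smooth with compact support on `ℝ^m`, `K ∈ ℝ`, `τ ∈ (0, 1/2)`, and
for `δ > 0` set `ψ_δ(x) = δ·φ(x')·f(x₁) + h(x') + K·x₁`.  Then there is `δ₀ > 0` such that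
for all `0 < δ < δ₀`, `σ₂(D²ψ_δ) < 1` on `{0 < x₁ < τ} ∩ B₂`. -/
theorem barrier_estimate (m : ℕ) (hm : 1 ≤ m)
    (h : EuclideanSpace ℝ (Fin m) → ℝ)
    (hh : ContDiff ℝ 2 h) (hharm : ∀ y, lap h y = 0)
    (φ : EuclideanSpace ℝ (Fin m) → ℝ)
    (hφ : ContDiff ℝ (⊤ : ℕ∞) φ) (hφc : HasCompactSupport φ)
    (K τ : ℝ) (hτ : τ ∈ Set.Ioo (0 : ℝ) (1 / 2)) :
    ∃ δ₀ > 0, ∀ δ : ℝ, 0 < δ → δ < δ₀ →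
      ∀ x : EuclideanSpace ℝ (Fin (m + 1)),
        0 < x 0 → x 0 < τ → x ∈ ball (0 : EuclideanSpace ℝ (Fin (m + 1))) 2 →
        sigma2 (hess (fun y : EuclideanSpace ℝ (Fin (m + 1)) =>
          δ * φ (WithLp.toLp 2 (fun i : Fin m => y i.succ)) * barrierProfile (y 0)
            + h (WithLp.toLp 2 (fun i : Fin m => y i.succ)) + K * y 0) x) < 1 := by
  classical
  -- bound on φ
  obtain ⟨Cφ, hCφ⟩ := hφc.exists_bound_of_continuous hφ.continuous
  have hCφ0 : 0 ≤ Cφ := le_trans (norm_nonneg _) (hCφ 0)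
  -- bounds on the second derivatives of φ
  have hbound : ∀ k : Fin m, ∃ C : ℝ, ∀ z, ‖hess φ z k k‖ ≤ C := by
    intro k
    set v : EuclideanSpace ℝ (Fin m) := EuclideanSpace.single k (1:ℝ) with hv
    set Fφ : EuclideanSpace ℝ (Fin m) → ℝ := fun z => fderiv ℝ φ z v with hFφ
    have hFφc : ContDiff ℝ (⊤ : ℕ∞) Fφ :=
      (hφ.fderiv_right (m := ((⊤ : ℕ∞) : WithTop ℕ∞)) (le_of_eq rfl)).clm_apply
        contDiff_const
    have hFφs : HasCompactSupport Fφ :=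
      (HasCompactSupport.fderiv (𝕜 := ℝ) hφc).comp_left (g := fun A : EuclideanSpace ℝ (Fin m) →L[ℝ] ℝ => A v) rfl
    set G : EuclideanSpace ℝ (Fin m) → ℝ := fun z => fderiv ℝ Fφ z v with hG
    have hGc : Continuous G :=
      (((hFφc.fderiv_right (m := ((⊤ : ℕ∞) : WithTop ℕ∞)) (le_of_eq rfl)).clm_apply
        contDiff_const).continuous (n := ((⊤ : ℕ∞) : WithTop ℕ∞)))
    have hGs : HasCompactSupport G :=
      (HasCompactSupport.fderiv (𝕜 := ℝ) hFφs).comp_left (g := fun A : EuclideanSpace ℝ (Fin m) →L[ℝ] ℝ => A v) rfl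
    obtain ⟨C, hC⟩ := hGs.exists_bound_of_continuous hGc
    exact ⟨C, fun z => hC z⟩
  choose Cd hCd using hbound
  set CΔ : ℝ := ∑ k : Fin m, Cd k with hCΔ
  have hCΔ0 : 0 ≤ CΔ := Finset.sum_nonneg fun k _ =>
    le_trans (norm_nonneg _) (hCd k 0)
  have hΔbound : ∀ z, |∑ k : Fin m, hess φ z k k| ≤ CΔ := by
    intro z
    calc |∑ k : Fin m, hess φ z k k| ≤ ∑ k : Fin m, |hess φ z k k| :=
          Finset.abs_sum_le_sum_abs _ _
      _ ≤ CΔ := Finset.sum_le_sum fun k _ => hCd k z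
  set C : ℝ := Cφ * CΔ + CΔ ^ 2 / 2 with hCdef
  have hC0 : 0 ≤ C := by positivity
  refine ⟨1 / (C + 1), by positivity, ?_⟩
  intro δ hδ0 hδ1 x hx0 hxτ _
  have hx1 : x 0 < 1 := lt_trans hxτ (by linarith [hτ.2])
  have hxhalf : x 0 < 1/2 := lt_trans hxτ hτ.2
  -- rewrite the function using Pmap
  have hPy : ∀ y : EuclideanSpace ℝ (Fin (m + 1)),
      Pmap m y = WithLp.toLp 2 (fun i : Fin m => y i.succ) :=
    fun y => rfl
  have hueq : (fun y : EuclideanSpace ℝ (Fin (m + 1)) =>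
        δ * φ (WithLp.toLp 2 (fun i : Fin m => y i.succ)) * barrierProfile (y 0)
          + h (WithLp.toLp 2 (fun i : Fin m => y i.succ)) + K * y 0)
      = fun y => δ * φ (Pmap m y) * barrierProfile (y 0) + h (Pmap m y) + K * y 0 := by
    funext y; rw [hPy y]
  rw [hueq]
  obtain ⟨h00, hkk⟩ := main_calc h hh φ hφ δ K x hx0 hx1
  set H := hess (fun y => δ * φ (Pmap m y) * barrierProfile (y 0)
      + h (Pmap m y) + K * y 0) x with hH
  set X := Pmap m x with hX
  set t := x 0 with ht
  set a : ℝ := δ * (φ X * B2 t) with ha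
  set Sφ : ℝ := ∑ k : Fin m, hess φ X k k with hSφ
  set S : ℝ := δ * (barrierProfile t * Sφ) with hS
  clear_value H X t a Sφ S
  -- trace
  have hlap : ∑ k : Fin m, hess h X k k = 0 := by
    have := hharm X
    unfold lap at this
    simpa [Matrix.trace, Matrix.diag] using this
  have hsum : ∑ k : Fin m, H k.succ k.succ = S := by
    have hcg : ∀ k ∈ Finset.univ, H k.succ k.succ
        = δ * (barrierProfile t * hess φ X k k) + hess h X k k := fun k _ => hkk k
    rw [Finset.sum_congr rfl hcg, Finset.sum_add_distrib, hlap, add_zero,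
      ← Finset.mul_sum, ← Finset.mul_sum, hS, hSφ]
  have htr : H.trace = a + S := by
    calc H.trace = ∑ i, H i i := by simp [Matrix.trace, Matrix.diag]
      _ = H 0 0 + ∑ k : Fin m, H k.succ k.succ := Fin.sum_univ_succ _
      _ = a + S := by rw [h00, hsum]
  -- lower bound on the Frobenius term
  have hQ : a ^ 2 ≤ ∑ i, ∑ j, H i j ^ 2 := by
    have h1 : H 0 0 ^ 2 ≤ ∑ j, H 0 j ^ 2 :=
      Finset.single_le_sum (f := fun j => H 0 j ^ 2) (fun j _ => sq_nonneg _)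
        (Finset.mem_univ 0)
    have h2 : ∑ j, H 0 j ^ 2 ≤ ∑ i, ∑ j, H i j ^ 2 :=
      Finset.single_le_sum (f := fun i => ∑ j, H i j ^ 2)
        (fun i _ => Finset.sum_nonneg fun j _ => sq_nonneg _) (Finset.mem_univ 0)
    calc a ^ 2 = H 0 0 ^ 2 := by rw [h00]
      _ ≤ _ := le_trans h1 h2
  -- numerical bounds
  have hbp0 : 0 ≤ barrierProfile t := bp_nonneg hx0
  have hbp1 : barrierProfile t ≤ 1 := bp_le_one hx0 hx1
  have hB2bp : |B2 t * barrierProfile t| ≤ 1 := B2_mul_bp hx0 hxhalf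
  have hφX : |φ X| ≤ Cφ := hCφ X
  have hSφb : |Sφ| ≤ CΔ := by rw [hSφ]; exact hΔbound X
  have haS : a * S ≤ δ ^ 2 * (Cφ * CΔ) := by
    have : a * S = δ ^ 2 * ((φ X * Sφ) * (B2 t * barrierProfile t)) := by
      rw [ha, hS]; ring
    rw [this]
    have h1 : |(φ X * Sφ) * (B2 t * barrierProfile t)| ≤ Cφ * CΔ := by
      rw [abs_mul, abs_mul]
      calc |φ X| * |Sφ| * |B2 t * barrierProfile t|
          ≤ Cφ * CΔ * 1 := by
            apply mul_le_mul (mul_le_mul hφX hSφb (abs_nonneg _) hCφ0) hB2bp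
              (abs_nonneg _) (by positivity)
        _ = Cφ * CΔ := by ring
    nlinarith [le_abs_self ((φ X * Sφ) * (B2 t * barrierProfile t)), sq_nonneg δ, hδ0]
  have hS2 : S ^ 2 ≤ δ ^ 2 * CΔ ^ 2 := by
    rw [hS]
    have h1 : |barrierProfile t * Sφ| ≤ CΔ := by
      rw [abs_mul]
      calc |barrierProfile t| * |Sφ| ≤ 1 * CΔ := by
            apply mul_le_mul _ hSφb (abs_nonneg _) zero_le_one
            rw [abs_of_nonneg hbp0]; exact hbp1
        _ = CΔ := one_mul _
    have h2 : (barrierProfile t * Sφ) ^ 2 ≤ CΔ ^ 2 := by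
      nlinarith [abs_nonneg (barrierProfile t * Sφ), sq_abs (barrierProfile t * Sφ)]
    rw [mul_pow]
    exact mul_le_mul_of_nonneg_left h2 (sq_nonneg δ)
  have hδC : δ ^ 2 * (Cφ * CΔ) + δ ^ 2 * CΔ ^ 2 / 2 < 1 := by
    have hδ' : δ * (C + 1) < 1 := by
      have h1 : (0:ℝ) < C + 1 := by positivity
      calc δ * (C + 1) < (1 / (C + 1)) * (C + 1) := mul_lt_mul_of_pos_right hδ1 h1
        _ = 1 := by field_simp
    have hmC : 0 ≤ δ * C := mul_nonneg hδ0.le hC0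
    have hδle : δ ≤ 1 := by nlinarith
    have h2 : δ ^ 2 * C ≤ δ * C := by
      nlinarith [mul_nonneg (mul_nonneg hδ0.le (sub_nonneg.2 hδle)) hC0]
    have h3 : δ * C < 1 := by nlinarith
    have h4 : δ ^ 2 * C < 1 := lt_of_le_of_lt h2 h3
    rw [hCdef] at h4
    nlinarith [sq_nonneg δ]
  -- final assembly
  have hsig : sigma2 H = (H.trace ^ 2 - ∑ i, ∑ j, H i j ^ 2) / 2 := rfl
  rw [hsig, htr]
  have hexp : (a + S) ^ 2 = a ^ 2 + 2 * (a * S) + S ^ 2 := by ring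
  nlinarith [hQ, haS, hS2, hδC]
end

section
/- Let n ≥ 3 and write points of ℝⁿ as x = (x', x'') with x' ∈ ℝ² and x'' ∈ ℝ^{n−2}. Define u(x', x'') := |x'|·(1 + |x''|²). Then at every point with x' ≠ 0 the function u is smooth and satisfies (1/2)·σ₂(D²u) = (n−2) + (n−2)(n−3)|x'|² + (n−4)|x''|². -/
set_option maxRecDepth 8000
open Sum


open Metric MeasureTheory

/-- The first factor `x'` of a point `x = (x', x'') ∈ ℝ² × ℝ^{n−2}`. -/
def fstPart (m : ℕ) (x : EuclideanSpace ℝ (Fin 2 ⊕ Fin m)) : EuclideanSpace ℝ (Fin 2) :=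
  WithLp.toLp 2 (fun i => x (Sum.inl i))

/-- The second factor `x''` of a point `x = (x', x'') ∈ ℝ² × ℝ^{n−2}`. -/
def sndPart (m : ℕ) (x : EuclideanSpace ℝ (Fin 2 ⊕ Fin m)) : EuclideanSpace ℝ (Fin m) :=
  WithLp.toLp 2 (fun i => x (Sum.inr i))

/-- The function `u(x', x'') = |x'|·(1 + |x''|²)`. -/
noncomputable def modelFn (m : ℕ) (x : EuclideanSpace ℝ (Fin 2 ⊕ Fin m)) : ℝ :=
  ‖fstPart m x‖ * (1 + ‖sndPart m x‖ ^ 2)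

namespace ModelAux

variable {m : ℕ}

abbrev E (m : ℕ) := EuclideanSpace ℝ (Fin 2 ⊕ Fin m)

noncomputable abbrev pr (i : Fin 2 ⊕ Fin m) : E m →L[ℝ] ℝ := EuclideanSpace.proj (𝕜 := ℝ) i

def Sf (m : ℕ) (y : E m) : ℝ := y (inl 0) * y (inl 0) + y (inl 1) * y (inl 1)

def Qf (m : ℕ) (y : E m) : ℝ := ∑ k : Fin m, y (inr k) * y (inr k)

noncomputable def Rf (m : ℕ) (y : E m) : ℝ := Real.sqrt (Sf m y)

lemma Sf_nonneg (y : E m) : 0 ≤ Sf m y := by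
  have := mul_self_nonneg (y (inl 0)); have := mul_self_nonneg (y (inl 1)); unfold Sf; linarith

lemma Rf_sq (y : E m) : Rf m y * Rf m y = Sf m y := Real.mul_self_sqrt (Sf_nonneg y)

lemma Rf_pos {y : E m} (h : Sf m y ≠ 0) : 0 < Rf m y :=
  Real.sqrt_pos.2 (lt_of_le_of_ne (Sf_nonneg y) (Ne.symm h))

lemma modelFn_eq (y : E m) : modelFn m y = Rf m y * (1 + Qf m y) := by
  unfold modelFn Rf Sf Qf
  congr 1
  · rw [EuclideanSpace.norm_eq]
    congr 1
    rw [Fin.sum_univ_two]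
    simp [fstPart, Real.norm_eq_abs, ← sq_abs, sq, abs_mul_abs_self]
    ring_nf
    simp [sq]
  · congr 1
    rw [EuclideanSpace.norm_eq, Real.sq_sqrt (by positivity)]
    congr 1; funext k
    simp [sndPart, Real.norm_eq_abs, sq, abs_mul_abs_self]

/-- directional-derivative (gradient component) functions -/
noncomputable def Gf (m : ℕ) (j : Fin 2 ⊕ Fin m) (y : E m) : ℝ :=
  match j with
  | inl i => y (inl i) * (1 + Qf m y) * (Rf m y)⁻¹
  | inr k => 2 * Rf m y * y (inr k)

noncomputable def DS (y : E m) : E m →L[ℝ] ℝ :=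
  (y (inl 0) • pr (inl 0) + y (inl 0) • pr (inl 0)) +
    (y (inl 1) • pr (inl 1) + y (inl 1) • pr (inl 1))

noncomputable def DQ (y : E m) : E m →L[ℝ] ℝ :=
  ∑ k : Fin m, (y (inr k) • pr (inr k) + y (inr k) • pr (inr k))

lemma hasFDerivAt_Sf (y : E m) : HasFDerivAt (Sf m) (DS y) y :=
  (((pr (inl 0)).hasFDerivAt.mul (pr (inl 0)).hasFDerivAt).add
    ((pr (inl 1)).hasFDerivAt.mul (pr (inl 1)).hasFDerivAt))

lemma hasFDerivAt_Qf (y : E m) : HasFDerivAt (Qf m) (DQ y) y :=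
  HasFDerivAt.fun_sum fun k _ => (pr (inr k)).hasFDerivAt.mul (pr (inr k)).hasFDerivAt

noncomputable def DR (y : E m) : E m →L[ℝ] ℝ := (1 / (2 * Rf m y)) • DS y

lemma hasFDerivAt_Rf {y : E m} (h : Sf m y ≠ 0) : HasFDerivAt (Rf m) (DR y) y :=
  (Real.hasDerivAt_sqrt h).comp_hasFDerivAt y (hasFDerivAt_Sf y)

noncomputable def DinvR (y : E m) : E m →L[ℝ] ℝ := (-(Rf m y ^ 2)⁻¹) • DR y

lemma hasFDerivAt_invRf {y : E m} (h : Sf m y ≠ 0) :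
    HasFDerivAt (fun y => (Rf m y)⁻¹) (DinvR y) y :=
  (hasDerivAt_inv (Rf_pos h).ne').comp_hasFDerivAt y (hasFDerivAt_Rf h)

noncomputable def Du (y : E m) : E m →L[ℝ] ℝ :=
  Rf m y • ((0 : E m →L[ℝ] ℝ) + DQ y) + (1 + Qf m y) • DR y

lemma hasFDerivAt_modelFn {y : E m} (h : Sf m y ≠ 0) :
    HasFDerivAt (modelFn m) (Du y) y := by
  have : HasFDerivAt (fun y : E m => Rf m y * (1 + Qf m y)) (Du y) y :=
    (hasFDerivAt_Rf h).mul ((hasFDerivAt_const (1:ℝ) y).add (hasFDerivAt_Qf y))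
  exact this.congr_of_eventuallyEq (Filter.Eventually.of_forall fun z => (modelFn_eq z))

end ModelAux

namespace ModelAux
variable {m : ℕ}

lemma DS_apply (y : E m) (j : Fin 2 ⊕ Fin m) :
    DS y (EuclideanSpace.single j (1:ℝ)) =
      (if j = inl 0 then 2 * y (inl 0) else 0) + (if j = inl 1 then 2 * y (inl 1) else 0) := by
  rcases j with i | k
  · fin_cases i <;> simp [DS, EuclideanSpace.single_apply] <;> ring
  · simp [DS, EuclideanSpace.single_apply]

lemma DQ_apply_inl (y : E m) (i : Fin 2) :
    DQ y (EuclideanSpace.single (inl i) (1:ℝ)) = 0 := by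
  simp [DQ, ContinuousLinearMap.sum_apply, EuclideanSpace.single_apply]

lemma DQ_apply_inr (y : E m) (k : Fin m) :
    DQ y (EuclideanSpace.single (inr k) (1:ℝ)) = 2 * y (inr k) := by
  simp [DQ, ContinuousLinearMap.sum_apply, EuclideanSpace.single_apply,
    Finset.sum_add_distrib, Finset.sum_ite_eq']
  ring

lemma fderiv_modelFn_single {y : E m} (h : Sf m y ≠ 0) (j : Fin 2 ⊕ Fin m) :
    fderiv ℝ (modelFn m) y (EuclideanSpace.single j (1:ℝ)) = Gf m j y := by
  rw [(hasFDerivAt_modelFn h).fderiv]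
  have hr := (Rf_pos h).ne'
  rcases j with i | k
  · simp [Du, DR, DS_apply, DQ_apply_inl, Gf]
    fin_cases i <;> simp <;> field_simp <;> ring
  · simp [Du, DR, DS_apply, DQ_apply_inr, Gf]
    ring

end ModelAux

namespace ModelAux
variable {m : ℕ}

noncomputable def DGinl (y : E m) (i : Fin 2) : E m →L[ℝ] ℝ :=
  (y (inl i) * (1 + Qf m y)) • DinvR y +
    (Rf m y)⁻¹ • (y (inl i) • ((0 : E m →L[ℝ] ℝ) + DQ y) + (1 + Qf m y) • pr (inl i))

noncomputable def DGinr (y : E m) (k : Fin m) : E m →L[ℝ] ℝ :=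
  (2 * Rf m y) • pr (inr k) +
    y (inr k) • ((2 : ℝ) • DR y + Rf m y • (0 : E m →L[ℝ] ℝ))

lemma hasFDerivAt_Gf_inl {y : E m} (h : Sf m y ≠ 0) (i : Fin 2) :
    HasFDerivAt (Gf m (inl i)) (DGinl y i) y :=
  ((pr (inl i)).hasFDerivAt.mul ((hasFDerivAt_const (1:ℝ) y).add (hasFDerivAt_Qf y))).mul
    (hasFDerivAt_invRf h)

lemma hasFDerivAt_Gf_inr {y : E m} (h : Sf m y ≠ 0) (k : Fin m) :
    HasFDerivAt (Gf m (inr k)) (DGinr y k) y :=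
  ((hasFDerivAt_const (2:ℝ) y).mul (hasFDerivAt_Rf h)).mul (pr (inr k)).hasFDerivAt

lemma continuous_Sf : Continuous (Sf m) :=
  ((pr (inl 0)).continuous.mul (pr (inl 0)).continuous).add
    ((pr (inl 1)).continuous.mul (pr (inl 1)).continuous)

noncomputable def Hval (m : ℕ) (x : E m) : Matrix (Fin 2 ⊕ Fin m) (Fin 2 ⊕ Fin m) ℝ :=
  fun i j =>
    match i, j with
    | inl i, inl i' => (1 + Qf m x) * ((if i = i' then 1 else 0) * (Rf m x)⁻¹
        - x (inl i) * x (inl i') * ((Rf m x) ^ 3)⁻¹)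
    | inl i, inr k => 2 * x (inl i) * x (inr k) * (Rf m x)⁻¹
    | inr k, inl i => 2 * x (inl i) * x (inr k) * (Rf m x)⁻¹
    | inr k, inr l => if k = l then 2 * Rf m x else 0

lemma hess_eq {x : E m} (h : Sf m x ≠ 0) (i j : Fin 2 ⊕ Fin m) :
    hess (modelFn m) x i j = Hval m x i j := by
  have hev : ∀ᶠ y in nhds x, Sf m y ≠ 0 := continuous_Sf.continuousAt.eventually_ne h
  have heq : (fun y => fderiv ℝ (modelFn m) y (EuclideanSpace.single j (1:ℝ)))
      =ᶠ[nhds x] Gf m j := hev.mono fun y hy => fderiv_modelFn_single hy j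
  have hr := (Rf_pos h).ne'
  have hr2 := Rf_sq x
  unfold hess
  rw [heq.fderiv_eq]
  rcases j with jj | k
  · rw [(hasFDerivAt_Gf_inl h jj).fderiv]
    rcases i with ii | l
    · fin_cases ii <;> fin_cases jj <;>
        simp [DGinl, DinvR, DR, DS_apply, DQ_apply_inl, Hval, EuclideanSpace.single_apply] <;>
        field_simp <;> ring
    · simp [DGinl, DinvR, DR, DS_apply, DQ_apply_inr, Hval, EuclideanSpace.single_apply]
      ring
  · rw [(hasFDerivAt_Gf_inr h k).fderiv]
    rcases i with ii | l
    · fin_cases ii <;>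
        simp [DGinr, DR, DS_apply, Hval, EuclideanSpace.single_apply] <;> ring
    · simp [DGinr, DR, DS_apply, Hval, EuclideanSpace.single_apply]
      split_ifs with h1 h2 h2 <;> first | rfl | (exact absurd h1.symm h2) | (exact absurd h2.symm h1)

end ModelAux

namespace ModelAux
variable {m : ℕ}

lemma norm_fst (x : E m) : ‖fstPart m x‖ = Rf m x := by
  rw [EuclideanSpace.norm_eq, Rf]
  congr 1
  rw [Fin.sum_univ_two]
  simp only [fstPart, Sf, Real.norm_eq_abs, sq_abs, sq, abs_mul_abs_self]

lemma norm_snd_sq (x : E m) : ‖sndPart m x‖ ^ 2 = Qf m x := by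
  rw [EuclideanSpace.norm_eq, Real.sq_sqrt (by positivity)]
  unfold Qf
  congr 1; funext k
  simp [sndPart, Real.norm_eq_abs, sq, abs_mul_abs_self]

lemma contDiffAt_modelFn {x : E m} (h : Sf m x ≠ 0) :
    ContDiffAt ℝ (⊤ : ℕ∞) (modelFn m) x := by
  have hScd : ContDiff ℝ (⊤ : ℕ∞) (Sf m) :=
    ((pr (inl 0)).contDiff.mul (pr (inl 0)).contDiff).add
      ((pr (inl 1)).contDiff.mul (pr (inl 1)).contDiff)
  have hQcd : ContDiff ℝ (⊤ : ℕ∞) (Qf m) :=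
    ContDiff.sum fun k _ => (pr (inr k)).contDiff.mul (pr (inr k)).contDiff
  have hRcd : ContDiffAt ℝ (⊤ : ℕ∞) (Rf m) x :=
    (Real.contDiffAt_sqrt h).comp x hScd.contDiffAt
  have : ContDiffAt ℝ (⊤ : ℕ∞) (fun y : E m => Rf m y * (1 + Qf m y)) x :=
    hRcd.mul (contDiffAt_const.add hQcd.contDiffAt)
  exact this.congr_of_eventuallyEq (Filter.Eventually.of_forall fun z => modelFn_eq z)

end ModelAux

namespace ModelAux
variable {m : ℕ}

lemma trace_Hval (x : E m) :
    (Hval m x).trace =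
      (1 + Qf m x) * ((Rf m x)⁻¹ - x (inl 0) * x (inl 0) * ((Rf m x) ^ 3)⁻¹)
      + (1 + Qf m x) * ((Rf m x)⁻¹ - x (inl 1) * x (inl 1) * ((Rf m x) ^ 3)⁻¹)
      + m * (2 * Rf m x) := by
  simp [Matrix.trace, Matrix.diag, Fintype.sum_sum_type, Fin.sum_univ_two, Hval,
    Finset.sum_const]

lemma sum_sq_Hval (x : E m) :
    ∑ i, ∑ j, Hval m x i j ^ 2 =
      ((1 + Qf m x) * ((Rf m x)⁻¹ - x (inl 0) * x (inl 0) * ((Rf m x) ^ 3)⁻¹)) ^ 2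
      + ((1 + Qf m x) * (x (inl 0) * x (inl 1) * ((Rf m x) ^ 3)⁻¹)) ^ 2
      + ((1 + Qf m x) * (x (inl 1) * x (inl 0) * ((Rf m x) ^ 3)⁻¹)) ^ 2
      + ((1 + Qf m x) * ((Rf m x)⁻¹ - x (inl 1) * x (inl 1) * ((Rf m x) ^ 3)⁻¹)) ^ 2
      + 2 * ((2 * x (inl 0) * (Rf m x)⁻¹) ^ 2 * Qf m x
             + (2 * x (inl 1) * (Rf m x)⁻¹) ^ 2 * Qf m x)
      + m * (2 * Rf m x) ^ 2 := by
  have h1 : ∀ c : ℝ, ∑ k : Fin m, (2 * c * x (inr k) * (Rf m x)⁻¹) ^ 2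
      = (2 * c * (Rf m x)⁻¹) ^ 2 * Qf m x := by
    intro c
    rw [Qf, Finset.mul_sum]
    exact Finset.sum_congr rfl fun k _ => by ring
  have h2 : ∑ k : Fin m, ∑ l : Fin m, (if k = l then 2 * Rf m x else 0) ^ 2
      = m * (2 * Rf m x) ^ 2 := by
    have h3 : ∀ k : Fin m, ∑ l : Fin m, (if k = l then 2 * Rf m x else 0) ^ 2
        = (2 * Rf m x) ^ 2 := by
      intro k
      rw [Finset.sum_eq_single k (fun l _ hl => by simp [Ne.symm hl]) (by simp)]
      simp
    rw [Finset.sum_congr rfl fun k _ => h3 k, Finset.sum_const]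
    simp [mul_comm]
  simp only [Fintype.sum_sum_type, Fin.sum_univ_two, Hval, Finset.sum_add_distrib]
  rw [h1, h1, h2]
  norm_num [Fin.ext_iff]
  ring

end ModelAux


open ModelAux

/-- **The model computation.**  Let `n = m + 2 ≥ 3` and write `x = (x', x'') ∈ ℝ² × ℝ^{n−2}`.
Then `u(x',x'') = |x'|(1+|x''|²)` is smooth wherever `x' ≠ 0` and satisfies there
`(1/2)·σ₂(D²u) = (n−2) + (n−2)(n−3)|x'|² + (n−4)|x''|²`. -/
theorem model_computation (m : ℕ) (hm : 1 ≤ m)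
    (x : EuclideanSpace ℝ (Fin 2 ⊕ Fin m)) (hx : fstPart m x ≠ 0) :
    ContDiffAt ℝ (⊤ : ℕ∞) (modelFn m) x ∧
    (1 / 2) * sigma2 (hess (modelFn m) x) =
      (((m : ℝ) + 2) - 2)
        + (((m : ℝ) + 2) - 2) * (((m : ℝ) + 2) - 3) * ‖fstPart m x‖ ^ 2
        + (((m : ℝ) + 2) - 4) * ‖sndPart m x‖ ^ 2 := by
  have hSne : Sf m x ≠ 0 := by
    intro h0
    apply hx
    have h0' : x (inl 0) * x (inl 0) + x (inl 1) * x (inl 1) = 0 := h0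
    have ha : x (inl 0) = 0 := mul_self_eq_zero.mp
      (le_antisymm (by nlinarith [mul_self_nonneg (x (inl 1))]) (mul_self_nonneg _))
    have hb : x (inl 1) = 0 := mul_self_eq_zero.mp
      (le_antisymm (by nlinarith [mul_self_nonneg (x (inl 0))]) (mul_self_nonneg _))
    ext i
    fin_cases i
    · simpa [fstPart] using ha
    · simpa [fstPart] using hb
  refine ⟨contDiffAt_modelFn hSne, ?_⟩
  have hmat : hess (modelFn m) x = Hval m x := funext fun i => funext fun j => hess_eq hSne i j
  rw [hmat, sigma2, trace_Hval, sum_sq_Hval, norm_fst, norm_snd_sq]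
  have hr := Rf_pos hSne
  have hr2 : x (inl 0) * x (inl 0) + x (inl 1) * x (inl 1) = Rf m x * Rf m x := (Rf_sq x).symm
  set r := Rf m x with hrdef
  set q := Qf m x with hqdef
  set A := x (inl 0)
  set B := x (inl 1)
  field_simp
  ring_nf
  linear_combination (-4*q*r^2 - (8+4*(m:ℝ))*q*r^4 - 2*q^2*r^2 - 2*r^2
    - 4*(m:ℝ)*r^4) * hr2
end

section
/- Let w : ℝ³ → ℝ be continuous, positively one-homogeneous (w(tx) = t·w(x) for all t > 0 and x ∈ ℝ³), and smooth on ℝ³ ∖ {0}, and suppose Δw ≥ 0 and σ₂(D²w) = 0 at every point of ℝ³ ∖ {0}. Then for every x ≠ 0 the Hessian D²w(x) is positive semidefinite of rank at most 1; consequently w is a convex function on ℝ³. -/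
open Metric MeasureTheory
open Matrix

lemma matrix_key {M : Matrix (Fin 3) (Fin 3) ℝ} (hM : M.IsHermitian)
    {x : Fin 3 → ℝ} (hx : x ≠ 0) (hMx : M *ᵥ x = 0)
    (htr : 0 ≤ M.trace) (hfr : M.trace ^ 2 = ∑ i, ∑ j, M i j ^ 2) :
    M.PosSemidef ∧ M.rank ≤ 1 := by
  set lam := hM.eigenvalues with hlam
  have hsym : ∀ i j, M j i = M i j := fun i j => by
    have := hM.apply i j; simpa using this
  have htrace : M.trace = ∑ i, lam i := by
    conv_lhs => rw [hM.spectral_theorem, Unitary.conjStarAlgAut_apply]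
    rw [Matrix.trace_mul_cycle]
    rw [show (star (hM.eigenvectorUnitary : Matrix (Fin 3) (Fin 3) ℝ)) * (hM.eigenvectorUnitary : Matrix (Fin 3) (Fin 3) ℝ) = 1 from (Matrix.mem_unitaryGroup_iff').mp (hM.eigenvectorUnitary).2]
    simp [Matrix.trace_diagonal, hlam]
  have hpow : ∑ i, ∑ j, M i j ^ 2 = ∑ i, lam i ^ 2 := by
    have h1 : ∑ i, ∑ j, M i j ^2 = (M * M).trace := by
      simp only [Matrix.trace, Matrix.mul_apply, Matrix.diag, pow_two]
      congr 1; ext i; congr 1; ext j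
      rw [hsym i j]
    rw [h1]
    conv_lhs => rw [hM.spectral_theorem, Unitary.conjStarAlgAut_apply]
    rw [show ∀ U D : Matrix (Fin 3) (Fin 3) ℝ, (U * D * star U) * (U * D * star U) = U * (D * (star U * U) * D) * star U by intros; noncomm_ring]
    rw [show (star (hM.eigenvectorUnitary : Matrix (Fin 3) (Fin 3) ℝ)) * (hM.eigenvectorUnitary : Matrix (Fin 3) (Fin 3) ℝ) = 1 from (Matrix.mem_unitaryGroup_iff').mp (hM.eigenvectorUnitary).2]
    rw [Matrix.trace_mul_cycle]
    rw [show (star (hM.eigenvectorUnitary : Matrix (Fin 3) (Fin 3) ℝ)) * (hM.eigenvectorUnitary : Matrix (Fin 3) (Fin 3) ℝ) = 1 from (Matrix.mem_unitaryGroup_iff').mp (hM.eigenvectorUnitary).2]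
    simp [Matrix.diagonal_mul_diagonal, Matrix.trace_diagonal, pow_two, hlam]
  have hdet : M.det = 0 := by
    rw [← Matrix.exists_mulVec_eq_zero_iff]
    exact ⟨x, hx, hMx⟩
  have hprod : lam 0 * lam 1 * lam 2 = 0 := by
    have := hM.det_eq_prod_eigenvalues
    rw [hdet] at this
    have h := this.symm
    simpa [Fin.prod_univ_three] using h
  have hsum : 0 ≤ lam 0 + lam 1 + lam 2 := by
    rw [htrace] at htr; simpa [Fin.sum_univ_three] using htr
  have he2 : lam 0 * lam 1 + lam 0 * lam 2 + lam 1 * lam 2 = 0 := by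
    rw [htrace, hpow] at hfr
    simp only [Fin.sum_univ_three] at hfr
    nlinarith [hfr]
  -- arithmetic: all eigenvalues nonneg, at most one nonzero
  have key : (∀ i, 0 ≤ lam i) ∧ (∀ i j, i ≠ j → lam i * lam j = 0) := by
    have h0 : lam 0 = 0 ∨ lam 1 = 0 ∨ lam 2 = 0 := by
      rcases mul_eq_zero.mp hprod with h | h
      · rcases mul_eq_zero.mp h with h | h
        · exact Or.inl h
        · exact Or.inr (Or.inl h)
      · exact Or.inr (Or.inr h)
    have main : ∀ a b c : ℝ, a * b * c = 0 → 0 ≤ a + b + c →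
        a * b + a * c + b * c = 0 → 0 ≤ a ∧ a * b = 0 ∧ a * c = 0 ∧ b * c = 0 := by
      intro a b c hp hs h2
      rcases mul_eq_zero.mp hp with h | hc
      · rcases mul_eq_zero.mp h with ha | hb
        · subst ha
          constructor; · rfl
          refine ⟨by ring, by ring, ?_⟩
          nlinarith
        · subst hb
          have hac : a * c = 0 := by nlinarith
          rcases mul_eq_zero.mp hac with h | h
          · subst h; exact ⟨le_refl 0, by ring, by ring, by ring⟩
          · subst h; exact ⟨by nlinarith, by ring, by ring, by ring⟩
      · subst hc
        have hab : a * b = 0 := by nlinarith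
        rcases mul_eq_zero.mp hab with h | h
        · subst h; exact ⟨le_refl 0, by ring, by ring, by ring⟩
        · subst h; exact ⟨by nlinarith, by ring, by ring, by ring⟩
    have m012 := main (lam 0) (lam 1) (lam 2) hprod hsum he2
    have m120 := main (lam 1) (lam 2) (lam 0) (by nlinarith) (by nlinarith) (by nlinarith)
    have m201 := main (lam 2) (lam 0) (lam 1) (by nlinarith) (by nlinarith) (by nlinarith)
    constructor
    · intro i
      fin_cases i
      · exact m012.1
      · exact m120.1
      · exact m201.1
    · intro i j hij
      have p01 := m012.2.1
      have p02 := m012.2.2.1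
      have p12 := m012.2.2.2
      have hcase : ∀ k : Fin 3, k = 0 ∨ k = 1 ∨ k = 2 := by decide
      rcases hcase i with rfl | rfl | rfl <;> rcases hcase j with rfl | rfl | rfl <;>
        first
          | exact absurd rfl hij
          | linear_combination p01
          | linear_combination p02
          | linear_combination p12
  have hpsd : M.PosSemidef := hM.posSemidef_iff_eigenvalues_nonneg.mpr key.1
  refine ⟨hpsd, ?_⟩
  rw [hM.rank_eq_card_non_zero_eigs, Fintype.card_le_one_iff]
  rintro ⟨i, hi⟩ ⟨j, hj⟩
  have hij : i = j := by
    by_contra hne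
    rcases mul_eq_zero.mp (key.2 i j hne) with h | h
    · exact hi h
    · exact hj h
  exact Subtype.ext hij

open Filter Topology

local notation "E3" => EuclideanSpace ℝ (Fin 3)

lemma sum_single_eq (v : E3) : ∑ i, v i • EuclideanSpace.single i (1:ℝ) = v := by
  ext j
  have h := map_sum (EuclideanSpace.proj (𝕜 := ℝ) j)
    (fun i => v i • EuclideanSpace.single i (1:ℝ)) Finset.univ
  simp only [PiLp.proj_apply, PiLp.smul_apply, EuclideanSpace.single_apply,
    smul_eq_mul, mul_ite, mul_one, mul_zero] at h
  rw [h]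
  simp

section
variable {w : E3 → ℝ}

lemma diffAt (hsmooth : ContDiffOn ℝ (⊤ : ℕ∞) w {(0 : E3)}ᶜ) {x : E3} (hx : x ≠ 0) :
    ContDiffAt ℝ (⊤ : ℕ∞) w x :=
  hsmooth.contDiffAt (isOpen_compl_singleton.mem_nhds (by simpa using hx))

lemma ev_hasFDerivAt (hsmooth : ContDiffOn ℝ (⊤ : ℕ∞) w {(0 : E3)}ᶜ) {x : E3} (hx : x ≠ 0) :
    ∀ᶠ y in 𝓝 x, HasFDerivAt w (fderiv ℝ w y) y := by
  filter_upwards [isOpen_compl_singleton.mem_nhds (show x ∈ _ by simpa using hx)] with y hy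
  exact ((diffAt hsmooth (by simpa using hy)).differentiableAt (by simp)).hasFDerivAt

lemma hasFDerivAt_fderiv (hsmooth : ContDiffOn ℝ (⊤ : ℕ∞) w {(0 : E3)}ᶜ) {x : E3} (hx : x ≠ 0) :
    HasFDerivAt (fderiv ℝ w) (fderiv ℝ (fderiv ℝ w) x) x := by
  have h1 : ContDiffOn ℝ (⊤ : ℕ∞) (fderiv ℝ w) {(0 : E3)}ᶜ :=
    hsmooth.fderiv_of_isOpen isOpen_compl_singleton (by simp)
  have h2 : ContDiffAt ℝ (⊤ : ℕ∞) (fderiv ℝ w) x :=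
    h1.contDiffAt (isOpen_compl_singleton.mem_nhds (by simpa using hx))
  exact (h2.differentiableAt (by simp)).hasFDerivAt

lemma hess_eq (hsmooth : ContDiffOn ℝ (⊤ : ℕ∞) w {(0 : E3)}ᶜ) {x : E3} (hx : x ≠ 0)
    (i j : Fin 3) :
    hess w x i j = fderiv ℝ (fderiv ℝ w) x (EuclideanSpace.single i 1)
      (EuclideanSpace.single j 1) := by
  have h := (ContinuousLinearMap.apply ℝ ℝ (EuclideanSpace.single j (1:ℝ))).hasFDerivAt.comp x
    (hasFDerivAt_fderiv hsmooth hx)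
  have h2 : fderiv ℝ (fun y => fderiv ℝ w y (EuclideanSpace.single j (1:ℝ))) x
      = (ContinuousLinearMap.apply ℝ ℝ (EuclideanSpace.single j (1:ℝ))).comp
          (fderiv ℝ (fderiv ℝ w) x) := h.fderiv
  rw [hess, h2]
  rfl

lemma f''_symm (hsmooth : ContDiffOn ℝ (⊤ : ℕ∞) w {(0 : E3)}ᶜ) {x : E3} (hx : x ≠ 0)
    (u v : E3) :
    fderiv ℝ (fderiv ℝ w) x u v = fderiv ℝ (fderiv ℝ w) x v u :=
  second_derivative_symmetric_of_eventually (ev_hasFDerivAt hsmooth hx)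
    (hasFDerivAt_fderiv hsmooth hx) u v

end
section
variable {w : E3 → ℝ}

lemma fderiv_homog (hsmooth : ContDiffOn ℝ (⊤ : ℕ∞) w {(0 : E3)}ᶜ)
    (hhom : ∀ t : ℝ, 0 < t → ∀ x : E3, w (t • x) = t * w x)
    {t : ℝ} (ht : 0 < t) {x : E3} (hx : x ≠ 0) :
    fderiv ℝ w (t • x) = fderiv ℝ w x := by
  have htx : t • x ≠ 0 := smul_ne_zero (ne_of_gt ht) hx
  have hdtx : DifferentiableAt ℝ w (t • x) :=
    (diffAt hsmooth htx).differentiableAt (by simp)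
  have hdx : DifferentiableAt ℝ w x :=
    (diffAt hsmooth hx).differentiableAt (by simp)
  have hsm : HasFDerivAt (fun y : E3 => t • y) (t • ContinuousLinearMap.id ℝ E3) x := by
    exact (hasFDerivAt_id x).const_smul t
  have h1 : HasFDerivAt (fun y : E3 => w (t • y))
      ((fderiv ℝ w (t • x)).comp (t • ContinuousLinearMap.id ℝ E3)) x :=
    hdtx.hasFDerivAt.comp x hsm
  have h2 : HasFDerivAt (fun y : E3 => t * w y) (t • fderiv ℝ w x) x :=
    hdx.hasFDerivAt.const_mul t
  have heq : (fun y : E3 => w (t • y)) = fun y : E3 => t * w y := by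
    funext y; exact hhom t ht y
  rw [heq] at h1
  have h3 := h1.unique h2
  have h4 : (fderiv ℝ w (t • x)).comp (t • ContinuousLinearMap.id ℝ E3)
      = t • fderiv ℝ w (t • x) := by
    ext u; simp
  rw [h4] at h3
  have ht' : t ≠ 0 := ne_of_gt ht
  ext u
  have := congrFun (congrArg (fun L : E3 →L[ℝ] ℝ => (L : E3 → ℝ)) h3) u
  simp only [ContinuousLinearMap.coe_smul', Pi.smul_apply, smul_eq_mul] at this
  exact mul_left_cancel₀ ht' this

lemma euler (hsmooth : ContDiffOn ℝ (⊤ : ℕ∞) w {(0 : E3)}ᶜ)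
    (hhom : ∀ t : ℝ, 0 < t → ∀ x : E3, w (t • x) = t * w x)
    {x : E3} (hx : x ≠ 0) :
    fderiv ℝ (fderiv ℝ w) x x = 0 := by
  have hpath : HasDerivAt (fun s : ℝ => x + s • x) x 0 := by
    simpa using ((hasDerivAt_id (0:ℝ)).smul_const x).const_add x
  have h1 : HasDerivAt (fun s : ℝ => fderiv ℝ w (x + s • x)) (fderiv ℝ (fderiv ℝ w) x x) 0 := by
    have hx0 : x + (0:ℝ) • x = x := by simp
    have hf := hasFDerivAt_fderiv hsmooth hx
    rw [← hx0] at hf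
    have := hf.comp_hasDerivAt 0 hpath
    simp only [hx0] at this; exact this
  have hconst : (fun s : ℝ => fderiv ℝ w (x + s • x)) =ᶠ[nhds (0:ℝ)] fun _ => fderiv ℝ w x := by
    filter_upwards [eventually_abs_sub_lt (0:ℝ) one_pos] with s hs
    have hs' : 0 < 1 + s := by
      simp only [sub_zero] at hs
      cases abs_lt.mp hs; linarith
    have : x + s • x = (1 + s) • x := by
      rw [add_smul, one_smul]
    rw [this]
    exact fderiv_homog hsmooth hhom hs' hx
  have h2 : HasDerivAt (fun s : ℝ => fderiv ℝ w (x + s • x)) 0 0 := by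
    exact (hasDerivAt_const (0:ℝ) (fderiv ℝ w x)).congr_of_eventuallyEq hconst
  exact h1.unique h2

end

lemma bilin_expand (B : E3 →L[ℝ] E3 →L[ℝ] ℝ) (u v : E3) :
    B u v = ∑ i, ∑ j, u i * v j *
      B (EuclideanSpace.single i 1) (EuclideanSpace.single j 1) := by
  conv_lhs => rw [← sum_single_eq u, ← sum_single_eq v]
  rw [map_sum B, ContinuousLinearMap.sum_apply]
  refine Finset.sum_congr rfl fun i _ => ?_
  rw [_root_.map_smul B, ContinuousLinearMap.smul_apply, map_sum, Finset.smul_sum]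
  refine Finset.sum_congr rfl fun j _ => ?_
  rw [_root_.map_smul]
  simp [smul_eq_mul]; ring

section
variable {w : E3 → ℝ}

lemma part1 (hsmooth : ContDiffOn ℝ (⊤ : ℕ∞) w {(0 : E3)}ᶜ)
    (hhom : ∀ t : ℝ, 0 < t → ∀ x : E3, w (t • x) = t * w x)
    (hsub : ∀ x : E3, x ≠ 0 → 0 ≤ lap w x)
    (hsigma : ∀ x : E3, x ≠ 0 → sigma2 (hess w x) = 0)
    {x : E3} (hx : x ≠ 0) :
    (hess w x).PosSemidef ∧ (hess w x).rank ≤ 1 := by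
  set B := fderiv ℝ (fderiv ℝ w) x with hB
  have hMij : ∀ i j, hess w x i j
      = B (EuclideanSpace.single i 1) (EuclideanSpace.single j 1) :=
    fun i j => hess_eq hsmooth hx i j
  have hsymB : ∀ u v, B u v = B v u := fun u v => f''_symm hsmooth hx u v
  have hherm : (hess w x).IsHermitian := by
    ext i j
    simp only [Matrix.conjTranspose_apply, RCLike.star_def, starRingEnd_apply, star_trivial]
    rw [hMij, hMij]
    exact hsymB _ _
  have hBx : ∀ v : E3, B x v = 0 := by
    intro v
    rw [euler hsmooth hhom hx]
    rfl
  have hone : ∀ j, B x (EuclideanSpace.single j 1)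
      = ∑ i, x i * B (EuclideanSpace.single i 1) (EuclideanSpace.single j 1) := by
    intro j
    conv_lhs => rw [← sum_single_eq x]
    rw [map_sum B, ContinuousLinearMap.sum_apply]
    refine Finset.sum_congr rfl fun i _ => ?_
    rw [_root_.map_smul B, ContinuousLinearMap.smul_apply]
    simp [smul_eq_mul]
  have hrow : ∀ j, ∑ i, hess w x j i * x i = 0 := by
    intro j
    have : ∑ i, hess w x j i * x i
        = ∑ i, x i * B (EuclideanSpace.single i 1) (EuclideanSpace.single j 1) := by
      refine Finset.sum_congr rfl fun i _ => ?_
      rw [hMij, hsymB]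
      ring
    rw [this, ← hone j, hBx]
  have hxc : (fun i => x i) ≠ (0 : Fin 3 → ℝ) := by
    intro h
    apply hx
    ext i
    exact congrFun h i
  have hMx : hess w x *ᵥ (fun i => x i) = 0 := by
    funext j
    simpa [Matrix.mulVec, dotProduct] using hrow j
  have htr : 0 ≤ (hess w x).trace := hsub x hx
  have hfr : (hess w x).trace ^ 2 = ∑ i, ∑ j, hess w x i j ^ 2 := by
    have := hsigma x hx
    rw [sigma2] at this
    linarith [this]
  exact matrix_key hherm hxc hMx htr hfr

end


lemma exists_perp (x y : E3) :
    ∃ z : E3, z ≠ 0 ∧ inner ℝ x z = (0:ℝ) ∧ inner ℝ y z = (0:ℝ) := by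
  classical
  set S := Submodule.span ℝ ({x, y} : Set E3) with hS
  have hfr : Module.finrank ℝ S ≤ 2 := by
    have h1 := finrank_span_le_card (R := ℝ) ({x, y} : Set E3)
    have h2 : ({x, y} : Set E3).toFinset.card ≤ 2 := by
      rw [Set.toFinset_insert, Set.toFinset_singleton]
      exact (Finset.card_insert_le _ _).trans (by simp)
    exact h1.trans h2
  have hne : S ≠ ⊤ := by
    intro h
    have h3 : Module.finrank ℝ (⊤ : Submodule ℝ E3) = 3 := by
      rw [finrank_top]
      simp [finrank_euclideanSpace]
    rw [h] at hfr
    omega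
  have hbot : Sᗮ ≠ ⊥ := by
    intro h
    exact hne (Submodule.orthogonal_eq_bot_iff.mp h)
  obtain ⟨z, hzS, hz0⟩ := (Submodule.ne_bot_iff _).mp hbot
  refine ⟨z, hz0, ?_, ?_⟩
  · exact Submodule.inner_right_of_mem_orthogonal
      (Submodule.subset_span (show x ∈ ({x, y} : Set E3) by simp)) hzS
  · exact Submodule.inner_right_of_mem_orthogonal
      (Submodule.subset_span (show y ∈ ({x, y} : Set E3) by simp)) hzS

section
variable {w : E3 → ℝ}

lemma seg_convex (hcont : Continuous w)
    (hsmooth : ContDiffOn ℝ (⊤ : ℕ∞) w {(0 : E3)}ᶜ)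
    (hquad : ∀ p : E3, p ≠ 0 → ∀ u : E3, 0 ≤ fderiv ℝ (fderiv ℝ w) p u u)
    {x v : E3} (havoid : ∀ t ∈ Set.Icc (0:ℝ) 1, x + t • v ≠ 0) :
    ConvexOn ℝ (Set.Icc (0:ℝ) 1) (fun t => w (x + t • v)) := by
  set g := fun t : ℝ => w (x + t • v) with hg
  set φ := fun t : ℝ => fderiv ℝ w (x + t • v) v with hφ
  have hpath : ∀ t : ℝ, HasDerivAt (fun s : ℝ => x + s • v) v t := fun t => by
    simpa using ((hasDerivAt_id t).smul_const v).const_add x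
  have hg' : ∀ t ∈ Set.Icc (0:ℝ) 1, HasDerivAt g (φ t) t := by
    intro t ht
    have hw := ((diffAt hsmooth (havoid t ht)).differentiableAt
      (by simp)).hasFDerivAt
    exact hw.comp_hasDerivAt t (hpath t)
  have hφ' : ∀ t ∈ Set.Icc (0:ℝ) 1,
      HasDerivAt φ (fderiv ℝ (fderiv ℝ w) (x + t • v) v v) t := by
    intro t ht
    have hf := hasFDerivAt_fderiv hsmooth (havoid t ht)
    have happ := (ContinuousLinearMap.apply ℝ ℝ v).hasFDerivAt.comp (x + t • v) hf
    have := happ.comp_hasDerivAt t (hpath t)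
    exact this
  have hgc : ContinuousOn g (Set.Icc (0:ℝ) 1) := by
    apply Continuous.continuousOn
    exact hcont.comp (by continuity)
  apply convexOn_of_deriv2_nonneg (convex_Icc 0 1) hgc
  · intro t ht
    rw [interior_Icc] at ht
    exact ((hg' t ⟨ht.1.le, ht.2.le⟩).differentiableAt).differentiableWithinAt
  · intro t ht
    rw [interior_Icc] at ht
    have hev : deriv g =ᶠ[nhds t] φ := by
      filter_upwards [isOpen_Ioo.mem_nhds ht] with s hs
      exact (hg' s ⟨hs.1.le, hs.2.le⟩).deriv
    have hd : DifferentiableAt ℝ φ t := (hφ' t ⟨ht.1.le, ht.2.le⟩).differentiableAt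
    exact (hd.congr_of_eventuallyEq hev).differentiableWithinAt
  · intro t ht
    rw [interior_Icc] at ht
    have hev : deriv g =ᶠ[nhds t] φ := by
      filter_upwards [isOpen_Ioo.mem_nhds ht] with s hs
      exact (hg' s ⟨hs.1.le, hs.2.le⟩).deriv
    have h2 : deriv (deriv g) t = deriv φ t := hev.deriv_eq
    have h3 : deriv φ t = fderiv ℝ (fderiv ℝ w) (x + t • v) v v :=
      (hφ' t ⟨ht.1.le, ht.2.le⟩).deriv
    have : deriv^[2] g t = deriv (deriv g) t := by
      simp [Function.iterate_succ, Function.iterate_one]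
    rw [this, h2, h3]
    exact hquad _ (havoid t ⟨ht.1.le, ht.2.le⟩) v

end

section
variable {w : E3 → ℝ}

lemma quad_nonneg (hsmooth : ContDiffOn ℝ (⊤ : ℕ∞) w {(0 : E3)}ᶜ)
    (hhom : ∀ t : ℝ, 0 < t → ∀ x : E3, w (t • x) = t * w x)
    (hsub : ∀ x : E3, x ≠ 0 → 0 ≤ lap w x)
    (hsigma : ∀ x : E3, x ≠ 0 → sigma2 (hess w x) = 0)
    {p : E3} (hp : p ≠ 0) (u : E3) :
    0 ≤ fderiv ℝ (fderiv ℝ w) p u u := by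
  have hpsd := (part1 hsmooth hhom hsub hsigma hp).1
  have h := hpsd.dotProduct_mulVec_nonneg (fun i => u i)
  have hexp : fderiv ℝ (fderiv ℝ w) p u u = ∑ i, ∑ j, u i * u j * hess w p i j := by
    rw [bilin_expand]
    exact Finset.sum_congr rfl fun i _ => Finset.sum_congr rfl fun j _ => by
      rw [hess_eq hsmooth hp]
  rw [hexp]
  have hdp : star (fun i => u i) ⬝ᵥ (hess w p *ᵥ (fun i => u i))
      = ∑ i, ∑ j, u i * u j * hess w p i j := by
    simp only [star_trivial, dotProduct, Matrix.mulVec, Finset.mul_sum]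
    exact Finset.sum_congr rfl fun i _ => Finset.sum_congr rfl fun j _ => by ring
  rw [← hdp]
  exact h

end

/-- **One-homogeneous solutions of `σ₂(D²w) = 0` in `ℝ³` are convex.**  If `w : ℝ³ → ℝ` is
continuous, positively one-homogeneous, smooth away from the origin, subharmonic away from
the origin, and satisfies `σ₂(D²w) = 0` away from the origin, then `D²w(x)` is positive
semidefinite of rank at most `1` for every `x ≠ 0`, and `w` is convex on `ℝ³`. -/
theorem one_homogeneous_sigma2_zero_convex (w : EuclideanSpace ℝ (Fin 3) → ℝ)
    (hcont : Continuous w)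
    (hhom : ∀ t : ℝ, 0 < t → ∀ x : EuclideanSpace ℝ (Fin 3), w (t • x) = t * w x)
    (hsmooth : ContDiffOn ℝ (⊤ : ℕ∞) w {(0 : EuclideanSpace ℝ (Fin 3))}ᶜ)
    (hsub : ∀ x : EuclideanSpace ℝ (Fin 3), x ≠ 0 → 0 ≤ lap w x)
    (hsigma : ∀ x : EuclideanSpace ℝ (Fin 3), x ≠ 0 → sigma2 (hess w x) = 0) :
    (∀ x : EuclideanSpace ℝ (Fin 3), x ≠ 0 → (hess w x).PosSemidef ∧ (hess w x).rank ≤ 1) ∧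
    ConvexOn ℝ Set.univ w := by
  have hquad : ∀ p : E3, p ≠ 0 → ∀ u : E3, 0 ≤ fderiv ℝ (fderiv ℝ w) p u u :=
    fun p hp u => quad_nonneg hsmooth hhom hsub hsigma hp u
  refine ⟨fun x hx => part1 hsmooth hhom hsub hsigma hx, ?_⟩
  refine ⟨convex_univ, ?_⟩
  intro x _ y _ a b ha hb hab
  obtain ⟨z, hz0, hxz, hyz⟩ := exists_perp x y
  have hzz : (0:ℝ) < inner ℝ z z := by
    rw [real_inner_self_eq_norm_sq]
    exact pow_pos (norm_pos_iff.mpr hz0) 2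
  have key : ∀ ε : ℝ, 0 < ε →
      w (a • x + b • y + ε • z) ≤ a * w (x + ε • z) + b * w (y + ε • z) := by
    intro ε hε
    have havoid : ∀ t ∈ Set.Icc (0:ℝ) 1, (x + ε • z) + t • (y - x) ≠ 0 := by
      intro t ht h0
      have h1 : inner ℝ ((x + ε • z) + t • (y - x)) z = (0:ℝ) := by
        rw [h0]; exact inner_zero_left z
      rw [inner_add_left, inner_add_left, real_inner_smul_left, real_inner_smul_left,
        inner_sub_left, hxz, hyz] at h1
      nlinarith [hzz]
    have hcx := seg_convex hcont hsmooth hquad havoid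
    have h01 : (0:ℝ) ∈ Set.Icc (0:ℝ) 1 := by norm_num
    have h11 : (1:ℝ) ∈ Set.Icc (0:ℝ) 1 := by norm_num
    have h2 := hcx.2 h01 h11 ha hb hab
    simp only [smul_eq_mul, mul_zero, mul_one, zero_add] at h2
    have e1 : (x + ε • z) + (0:ℝ) • (y - x) = x + ε • z := by
      rw [zero_smul, add_zero]
    have e2 : (x + ε • z) + b • (y - x) = a • x + b • y + ε • z := by
      have ha' : a = 1 - b := by linarith
      rw [ha']
      module
    have e3 : (x + ε • z) + (1:ℝ) • (y - x) = y + ε • z := by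
      rw [one_smul]
      abel
    rw [e1, e2, e3] at h2
    exact h2
  set F : ℝ → ℝ := fun ε => a * w (x + ε • z) + b * w (y + ε • z)
    - w (a • x + b • y + ε • z) with hF
  have hFc : Continuous F := by
    have c1 : Continuous fun ε : ℝ => x + ε • z := continuous_const.add (continuous_id.smul continuous_const)
    have c2 : Continuous fun ε : ℝ => y + ε • z := continuous_const.add (continuous_id.smul continuous_const)
    have c3 : Continuous fun ε : ℝ => a • x + b • y + ε • z := continuous_const.add (continuous_id.smul continuous_const)
    exact ((continuous_const.mul (hcont.comp c1)).add
      (continuous_const.mul (hcont.comp c2))).sub (hcont.comp c3)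
  have htendsto : Filter.Tendsto F (nhdsWithin 0 (Set.Ioi (0:ℝ))) (nhds (F 0)) :=
    (hFc.tendsto 0).mono_left nhdsWithin_le_nhds
  have h0 : 0 ≤ F 0 := by
    refine ge_of_tendsto htendsto ?_
    filter_upwards [self_mem_nhdsWithin] with ε hε
    have := key ε (Set.mem_Ioi.mp hε)
    rw [hF]
    dsimp only
    linarith
  rw [hF] at h0
  dsimp only at h0
  rw [zero_smul, add_zero, add_zero, add_zero] at h0
  simp only [smul_eq_mul]
  linarith
end
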